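/- arXiv:2511.21646 — 7 statements merged into one kernel-verified Lean document; each statement's English description precedes it below -/
import Mathlib

section
/- Suppose there is a constant C ≥ 0 such that |f₂(x,μ,q)| ≤ C(1+|q|_Λ) for all x ∈ H, μ ∈ 𝒫₂(H), q ∈ Λ̃, and there are constants C₁ ≥ 0 and C₂, C₃ > 0 such that −C₁ + C₂|q|²_Λ ≤ l₂(x,μ,q) ≤ C₁ + C₃|q|²_Λ for all x ∈ H, μ ∈ 𝒫₂(H), q ∈ Λ̃. Then for every C̃ > 0 there exists a constant K > 0 such that 𝓗ₙ(x,μ,p) = 𝓗ₙ^{K√n}(x,μ,p) for every n ≥ 1, every μ ∈ 𝒫₂(H), and all x = (x₁,…,xₙ), p = (p₁,…,pₙ) ∈ Hⁿ with (Σᵢ|pᵢ|²)^{1/2} ≤ C̃/√n. -/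
open MeasureTheory
open scoped RealInnerProductSpace ENNReal

lemma sInf_eq_sInf_trunc {Λ : Type*} [NormedAddCommGroup Λ] {n : ℕ} (g : Fin n → Λ → ℝ)
    (Λt : Set Λ) (m : ℝ)
    (h1 : BddBelow {v : ℝ | ∃ q : Fin n → Λ, (∀ i, q i ∈ Λt) ∧ v = ∑ i, g i (q i)})
    (h2 : {v : ℝ | ∃ q : Fin n → Λ, (∀ i, q i ∈ Λt) ∧
        Real.sqrt (∑ i, ‖q i‖ ^ 2) ≤ m ∧ v = ∑ i, g i (q i)}.Nonempty)
    (h3 : ∀ q : Fin n → Λ, (∀ i, q i ∈ Λt) → ∃ q' : Fin n → Λ, (∀ i, q' i ∈ Λt) ∧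
        Real.sqrt (∑ i, ‖q' i‖ ^ 2) ≤ m ∧ ∑ i, g i (q' i) ≤ ∑ i, g i (q i)) :
    sInf {v : ℝ | ∃ q : Fin n → Λ, (∀ i, q i ∈ Λt) ∧ v = ∑ i, g i (q i)}
      = sInf {v : ℝ | ∃ q : Fin n → Λ, (∀ i, q i ∈ Λt) ∧
          Real.sqrt (∑ i, ‖q i‖ ^ 2) ≤ m ∧ v = ∑ i, g i (q i)} := by
  have hsub : {v : ℝ | ∃ q : Fin n → Λ, (∀ i, q i ∈ Λt) ∧
      Real.sqrt (∑ i, ‖q i‖ ^ 2) ≤ m ∧ v = ∑ i, g i (q i)}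
      ⊆ {v : ℝ | ∃ q : Fin n → Λ, (∀ i, q i ∈ Λt) ∧ v = ∑ i, g i (q i)} := by
    rintro v ⟨q, hq, -, rfl⟩
    exact ⟨q, hq, rfl⟩
  refine le_antisymm (csInf_le_csInf h1 h2 hsub) (le_csInf (h2.mono hsub) ?_)
  rintro v ⟨q, hq, rfl⟩
  obtain ⟨q', hq', hm, hle⟩ := h3 q hq
  exact le_trans (csInf_le (h1.mono hsub) ⟨q', hq', hm, rfl⟩) hle

section

variable {H : Type*} [NormedAddCommGroup H] [InnerProductSpace ℝ H] [CompleteSpace H]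
  [SecondCountableTopology H] [MeasurableSpace H] [BorelSpace H]
variable {Λ : Type*} [NormedAddCommGroup Λ] [InnerProductSpace ℝ Λ] [CompleteSpace Λ]
  [SecondCountableTopology Λ]

/-- `μ` is a Borel probability measure on `H` with finite second moment. -/
def IsP2 (μ : Measure H) : Prop :=
  IsProbabilityMeasure μ ∧ (∫⁻ x, (‖x‖₊ : ℝ≥0∞) ^ 2 ∂μ) < ⊤

/-- The `n`-particle Hamiltonian
`𝓗ₙ(x,μ,p) = (1/n) inf_{q ∈ Λ̃ⁿ} Σᵢ (⟨f(xᵢ,μ,qᵢ), n pᵢ⟩ + l(xᵢ,μ,qᵢ))`. -/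
noncomputable def HamN (f : H → Measure H → Λ → H) (l : H → Measure H → Λ → ℝ)
    (Λt : Set Λ) (n : ℕ) (x : Fin n → H) (μ : Measure H) (p : Fin n → H) : ℝ :=
  (1 / (n : ℝ)) * sInf { v : ℝ | ∃ q : Fin n → Λ, (∀ i, q i ∈ Λt) ∧
    v = ∑ i, (⟪f (x i) μ (q i), (n : ℝ) • p i⟫ + l (x i) μ (q i)) }

/-- The truncated `n`-particle Hamiltonian `𝓗ₙᵐ`, where the infimum is restricted to
controls `q ∈ Λ̃ⁿ` with `(Σᵢ |qᵢ|²)^{1/2} ≤ m`. -/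
noncomputable def HamNm (f : H → Measure H → Λ → H) (l : H → Measure H → Λ → ℝ)
    (Λt : Set Λ) (n : ℕ) (m : ℝ) (x : Fin n → H) (μ : Measure H) (p : Fin n → H) : ℝ :=
  (1 / (n : ℝ)) * sInf { v : ℝ | ∃ q : Fin n → Λ, (∀ i, q i ∈ Λt) ∧
    Real.sqrt (∑ i, ‖q i‖ ^ 2) ≤ m ∧
    v = ∑ i, (⟪f (x i) μ (q i), (n : ℝ) • p i⟫ + l (x i) μ (q i)) }

/-- Under the growth assumptions on `f₂` and `l₂`, for every `C̃ > 0`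
there is `K > 0` such that `𝓗ₙ(x,μ,p) = 𝓗ₙ^{K√n}(x,μ,p)` whenever
`(Σᵢ|pᵢ|²)^{1/2} ≤ C̃/√n`. -/
theorem statement0
    (f₁ : H → Measure H → H) (f₂ : H → Measure H → Λ → H)
    (l₁ : H → Measure H → ℝ) (l₂ : H → Measure H → Λ → ℝ)
    (Λt : Set Λ) (hΛne : Λt.Nonempty) (hΛconv : Convex ℝ Λt)
    (C : ℝ) (hC : 0 ≤ C)
    (hf₂ : ∀ (x : H) (μ : Measure H) (q : Λ), IsP2 μ → q ∈ Λt →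
      ‖f₂ x μ q‖ ≤ C * (1 + ‖q‖))
    (C₁ C₂ C₃ : ℝ) (hC₁ : 0 ≤ C₁) (hC₂ : 0 < C₂) (hC₃ : 0 < C₃)
    (hl₂ : ∀ (x : H) (μ : Measure H) (q : Λ), IsP2 μ → q ∈ Λt →
      -C₁ + C₂ * ‖q‖ ^ 2 ≤ l₂ x μ q ∧ l₂ x μ q ≤ C₁ + C₃ * ‖q‖ ^ 2) :
    ∀ Ct : ℝ, 0 < Ct → ∃ K : ℝ, 0 < K ∧
      ∀ n : ℕ, 1 ≤ n → ∀ μ : Measure H, IsP2 μ →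
        ∀ x p : Fin n → H, Real.sqrt (∑ i, ‖p i‖ ^ 2) ≤ Ct / Real.sqrt n →
          HamN (fun a ν q => f₁ a ν + f₂ a ν q) (fun a ν q => l₁ a ν + l₂ a ν q)
              Λt n x μ p
            = HamNm (fun a ν q => f₁ a ν + f₂ a ν q) (fun a ν q => l₁ a ν + l₂ a ν q)
                Λt n (K * Real.sqrt n) x μ p := by
  obtain ⟨q₀, hq₀⟩ := hΛne
  intro Ct hCt
  set a : ℝ := C * Ct with ha_def
  set b : ℝ := C * (2 + ‖q₀‖) * Ct + 2*C₁ + C₃ * ‖q₀‖^2 with hb_def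
  have hq₀n : (0:ℝ) ≤ ‖q₀‖ := norm_nonneg _
  have ha : 0 ≤ a := mul_nonneg hC hCt.le
  have hb : 0 ≤ b := by nlinarith [sq_nonneg ‖q₀‖]
  set K : ℝ := max ‖q₀‖ (max 1 ((a+b+1)/C₂)) with hK_def
  have hK1 : 1 ≤ K := le_trans (le_max_left 1 _) (le_max_right _ _)
  have hKq : ‖q₀‖ ≤ K := le_max_left _ _
  have hCK : a + b + 1 ≤ C₂ * K := by
    have hX : (a+b+1)/C₂ ≤ K := le_trans (le_max_right 1 _) (le_max_right _ _)
    rw [div_le_iff₀ hC₂] at hX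
    nlinarith
  refine ⟨K, lt_of_lt_of_le one_pos hK1, ?_⟩
  intro n hn μ hμ x p hp
  have hn0 : (0:ℝ) < n := by exact_mod_cast hn
  have hsn1 : (1:ℝ) ≤ Real.sqrt n := by
    rw [show (1:ℝ) = Real.sqrt 1 from Real.sqrt_one.symm]
    exact Real.sqrt_le_sqrt (by exact_mod_cast hn)
  have hsn0 : (0:ℝ) < Real.sqrt n := lt_of_lt_of_le one_pos hsn1
  have hsnsq : Real.sqrt n * Real.sqrt n = (n:ℝ) := Real.mul_self_sqrt hn0.le
  -- norm of n • p i
  have hnorm : ∀ i, ‖(n:ℝ) • p i‖ = (n:ℝ) * ‖p i‖ := by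
    intro i; rw [norm_smul, Real.norm_natCast]
  -- inner bound
  have hI : ∀ i : Fin n, ∀ q ∈ Λt,
      |⟪f₂ (x i) μ q, (n:ℝ) • p i⟫| ≤ C * (1 + ‖q‖) * ((n:ℝ) * ‖p i‖) := by
    intro i q hq
    refine le_trans (abs_real_inner_le_norm _ _) ?_
    rw [hnorm i]
    exact mul_le_mul_of_nonneg_right (hf₂ _ _ _ hμ hq) (by positivity)
  -- expansion of the cost
  have hgexp : ∀ (i : Fin n) (q : Λ),
      (⟪f₁ (x i) μ + f₂ (x i) μ q, (n:ℝ) • p i⟫ + (l₁ (x i) μ + l₂ (x i) μ q))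
        = (⟪f₁ (x i) μ, (n:ℝ) • p i⟫ + l₁ (x i) μ)
          + (⟪f₂ (x i) μ q, (n:ℝ) • p i⟫ + l₂ (x i) μ q) := by
    intro i q
    rw [inner_add_left]
    ring
  -- quadratic lower bound
  have quad : ∀ t β : ℝ, -(β^2/(4*C₂)) ≤ C₂*t^2 - β*t := by
    intro t β
    have h4 : (0:ℝ) < 4*C₂ := by linarith
    have hd : β^2/(4*C₂)*(4*C₂) = β^2 := div_mul_cancel₀ _ (ne_of_gt h4)
    nlinarith [sq_nonneg (2*C₂*t - β)]
  -- uniform lower bound for each cost term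
  have hlow : ∀ i : Fin n, ∀ q ∈ Λt,
      (⟪f₁ (x i) μ, (n:ℝ) • p i⟫ + l₁ (x i) μ) - C*((n:ℝ)*‖p i‖) - C₁
          - (C*((n:ℝ)*‖p i‖))^2/(4*C₂)
        ≤ ⟪f₁ (x i) μ + f₂ (x i) μ q, (n:ℝ) • p i⟫ + (l₁ (x i) μ + l₂ (x i) μ q) := by
    intro i q hq
    have h1 := (abs_le.mp (hI i q hq)).1
    have h2 := (hl₂ (x i) μ q hμ hq).1
    have h3 := quad ‖q‖ (C*((n:ℝ)*‖p i‖))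
    have hexp : C*(1+‖q‖)*((n:ℝ)*‖p i‖)
        = C*((n:ℝ)*‖p i‖) + (C*((n:ℝ)*‖p i‖))*‖q‖ := by ring
    rw [hgexp i q]
    linarith
  -- bddBelow of the unconstrained set
  have hbdd : BddBelow {v : ℝ | ∃ q : Fin n → Λ, (∀ i, q i ∈ Λt) ∧
      v = ∑ i, (⟪f₁ (x i) μ + f₂ (x i) μ (q i), (n:ℝ) • p i⟫
        + (l₁ (x i) μ + l₂ (x i) μ (q i)))} := by
    refine ⟨∑ i, ((⟪f₁ (x i) μ, (n:ℝ) • p i⟫ + l₁ (x i) μ) - C*((n:ℝ)*‖p i‖) - C₁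
        - (C*((n:ℝ)*‖p i‖))^2/(4*C₂)), ?_⟩
    rintro v ⟨q, hq, rfl⟩
    exact Finset.sum_le_sum fun i _ => hlow i (q i) (hq i)
  -- the constant control q₀ is admissible
  have hq₀K : Real.sqrt (∑ _i : Fin n, ‖q₀‖ ^ 2) ≤ K * Real.sqrt n := by
    have h1 : (∑ _i : Fin n, ‖q₀‖ ^ 2) = (n:ℝ) * ‖q₀‖^2 := by
      simp [Finset.sum_const, Finset.card_univ, mul_comm]
    rw [h1, show (n:ℝ) * ‖q₀‖^2 = (Real.sqrt n * ‖q₀‖)^2 by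
      rw [mul_pow, Real.sq_sqrt hn0.le]]
    rw [Real.sqrt_sq (by positivity)]
    calc Real.sqrt n * ‖q₀‖ ≤ Real.sqrt n * K :=
          mul_le_mul_of_nonneg_left hKq hsn0.le
      _ = K * Real.sqrt n := mul_comm _ _
  have hne : {v : ℝ | ∃ q : Fin n → Λ, (∀ i, q i ∈ Λt) ∧
      Real.sqrt (∑ i, ‖q i‖ ^ 2) ≤ K * Real.sqrt n ∧
      v = ∑ i, (⟪f₁ (x i) μ + f₂ (x i) μ (q i), (n:ℝ) • p i⟫
        + (l₁ (x i) μ + l₂ (x i) μ (q i)))}.Nonempty :=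
    ⟨_, fun _ => q₀, fun _ => hq₀, hq₀K, rfl⟩
  -- Cauchy-Schwarz bounds
  have hSp : ∑ i, ‖p i‖ ≤ Ct := by
    have h := Real.sum_mul_le_sqrt_mul_sqrt Finset.univ
      (fun _ : Fin n => (1:ℝ)) (fun i => ‖p i‖)
    simp only [one_mul, one_pow, Finset.sum_const, Finset.card_univ, Fintype.card_fin,
      nsmul_eq_mul, mul_one] at h
    have h2 : Real.sqrt n * Real.sqrt (∑ i, ‖p i‖^2)
        ≤ Real.sqrt n * (Ct / Real.sqrt n) := by
      exact mul_le_mul_of_nonneg_left (by simpa using hp) hsn0.le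
    rw [mul_comm (Real.sqrt n) (Ct / Real.sqrt n),
      div_mul_cancel₀ _ (ne_of_gt hsn0)] at h2
    exact le_trans h h2
  have hSpq : ∀ q : Fin n → Λ, ∑ i, ‖p i‖ * ‖q i‖
      ≤ (Ct / Real.sqrt n) * Real.sqrt (∑ i, ‖q i‖^2) := by
    intro q
    refine le_trans (Real.sum_mul_le_sqrt_mul_sqrt Finset.univ
      (fun i => ‖p i‖) (fun i => ‖q i‖)) ?_
    exact mul_le_mul_of_nonneg_right (by simpa using hp) (Real.sqrt_nonneg _)
  -- per-coordinate comparison with q₀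
  have hcomp : ∀ i : Fin n, ∀ q ∈ Λt,
      (⟪f₁ (x i) μ + f₂ (x i) μ q₀, (n:ℝ) • p i⟫ + (l₁ (x i) μ + l₂ (x i) μ q₀))
        + (C₂*‖q‖^2 - C*(2+‖q₀‖)*(n:ℝ)*‖p i‖ - C*(n:ℝ)*(‖p i‖*‖q‖)
            - (2*C₁+C₃*‖q₀‖^2))
        ≤ ⟪f₁ (x i) μ + f₂ (x i) μ q, (n:ℝ) • p i⟫ + (l₁ (x i) μ + l₂ (x i) μ q) := by
    intro i q hq
    have h1 := (abs_le.mp (hI i q hq)).1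
    have h2 := (abs_le.mp (hI i q₀ hq₀)).2
    have h3 := (hl₂ (x i) μ q hμ hq).1
    have h4 := (hl₂ (x i) μ q₀ hμ hq₀).2
    have hid : C*(1+‖q‖)*((n:ℝ)*‖p i‖) + C*(1+‖q₀‖)*((n:ℝ)*‖p i‖)
        = C*(2+‖q₀‖)*(n:ℝ)*‖p i‖ + C*(n:ℝ)*(‖p i‖*‖q‖) := by ring
    rw [hgexp i q, hgexp i q₀]
    linarith
  -- summed comparison
  have hsumle : ∀ q : Fin n → Λ, (∀ i, q i ∈ Λt) →
      (∑ i, (⟪f₁ (x i) μ + f₂ (x i) μ q₀, (n:ℝ) • p i⟫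
          + (l₁ (x i) μ + l₂ (x i) μ q₀)))
        + (C₂*(∑ i, ‖q i‖^2) - C*(2+‖q₀‖)*(n:ℝ)*(∑ i, ‖p i‖)
            - C*(n:ℝ)*(∑ i, ‖p i‖*‖q i‖) - (n:ℝ)*(2*C₁+C₃*‖q₀‖^2))
        ≤ ∑ i, (⟪f₁ (x i) μ + f₂ (x i) μ (q i), (n:ℝ) • p i⟫
          + (l₁ (x i) μ + l₂ (x i) μ (q i))) := by
    intro q hq
    have h := Finset.sum_le_sum (fun i (_ : i ∈ Finset.univ) => hcomp i (q i) (hq i))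
    calc (∑ i, (⟪f₁ (x i) μ + f₂ (x i) μ q₀, (n:ℝ) • p i⟫
          + (l₁ (x i) μ + l₂ (x i) μ q₀)))
        + (C₂*(∑ i, ‖q i‖^2) - C*(2+‖q₀‖)*(n:ℝ)*(∑ i, ‖p i‖)
            - C*(n:ℝ)*(∑ i, ‖p i‖*‖q i‖) - (n:ℝ)*(2*C₁+C₃*‖q₀‖^2))
        = ∑ i, ((⟪f₁ (x i) μ + f₂ (x i) μ q₀, (n:ℝ) • p i⟫
            + (l₁ (x i) μ + l₂ (x i) μ q₀))
          + (C₂*‖q i‖^2 - C*(2+‖q₀‖)*(n:ℝ)*‖p i‖ - C*(n:ℝ)*(‖p i‖*‖q i‖)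
            - (2*C₁+C₃*‖q₀‖^2))) := by
          simp only [Finset.sum_add_distrib, Finset.sum_sub_distrib, ← Finset.mul_sum,
            Finset.sum_const, Finset.card_univ, Fintype.card_fin, nsmul_eq_mul]
          ring
      _ ≤ _ := h
  -- the main replacement property
  have h3 : ∀ q : Fin n → Λ, (∀ i, q i ∈ Λt) → ∃ q' : Fin n → Λ, (∀ i, q' i ∈ Λt) ∧
      Real.sqrt (∑ i, ‖q' i‖ ^ 2) ≤ K * Real.sqrt n ∧
      ∑ i, (⟪f₁ (x i) μ + f₂ (x i) μ (q' i), (n:ℝ) • p i⟫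
          + (l₁ (x i) μ + l₂ (x i) μ (q' i)))
        ≤ ∑ i, (⟪f₁ (x i) μ + f₂ (x i) μ (q i), (n:ℝ) • p i⟫
          + (l₁ (x i) μ + l₂ (x i) μ (q i))) := by
    intro q hq
    by_cases hc : Real.sqrt (∑ i, ‖q i‖^2) ≤ K * Real.sqrt n
    · exact ⟨q, hq, hc, le_refl _⟩
    · push_neg at hc
      refine ⟨fun _ => q₀, fun _ => hq₀, hq₀K, ?_⟩
      have hQ0 : 0 ≤ Real.sqrt (∑ i, ‖q i‖ ^ 2) := Real.sqrt_nonneg _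
      have hQsq : Real.sqrt (∑ i, ‖q i‖^2) ^ 2 = ∑ i, ‖q i‖^2 :=
        Real.sq_sqrt (by positivity)
      set Q := Real.sqrt (∑ i, ‖q i‖^2) with hQdef
      have e1 : (a+b+1)*Real.sqrt n ≤ C₂*Q :=
        calc (a+b+1)*Real.sqrt n ≤ (C₂*K)*Real.sqrt n :=
              mul_le_mul_of_nonneg_right hCK hsn0.le
          _ = C₂*(K*Real.sqrt n) := by ring
          _ ≤ C₂*Q := mul_le_mul_of_nonneg_left hc.le hC₂.le
      have e2 : (a+b+1)*Real.sqrt n*Q ≤ C₂*Q*Q := mul_le_mul_of_nonneg_right e1 hQ0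
      have hsnQ : Real.sqrt n ≤ Q := by nlinarith
      have e3 : b*(n:ℝ) ≤ b*(Real.sqrt n*Q) := by
        have h5 : Real.sqrt n*Real.sqrt n ≤ Real.sqrt n*Q :=
          mul_le_mul_of_nonneg_left hsnQ hsn0.le
        rw [hsnsq] at h5
        exact mul_le_mul_of_nonneg_left h5 hb
      have r1 : C*(2+‖q₀‖)*(n:ℝ)*(∑ i, ‖p i‖) ≤ C*(2+‖q₀‖)*(n:ℝ)*Ct :=
        mul_le_mul_of_nonneg_left hSp (by positivity)
      have r2 : C*(n:ℝ)*(∑ i, ‖p i‖*‖q i‖) ≤ C*(n:ℝ)*((Ct/Real.sqrt n)*Q) :=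
        mul_le_mul_of_nonneg_left (hSpq q) (by positivity)
      have r3 : C*(n:ℝ)*((Ct/Real.sqrt n)*Q) = a*(Real.sqrt n*Q) := by
        rw [ha_def]
        field_simp
        linear_combination (-(C*Q)) * hsnsq
      have r2' : C*(n:ℝ)*(∑ i, ‖p i‖*‖q i‖) ≤ a*(Real.sqrt n*Q) := r3 ▸ r2
      have hbn : b*(n:ℝ) = C*(2+‖q₀‖)*Ct*(n:ℝ) + 2*C₁*(n:ℝ) + C₃*‖q₀‖^2*(n:ℝ) := by
        rw [hb_def]; ring
      have hq2 : (∑ i, ‖q i‖^2) = Q*Q := by rw [← hQsq]; ring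
      have key : 0 ≤ C₂*(∑ i, ‖q i‖^2) - C*(2+‖q₀‖)*(n:ℝ)*(∑ i, ‖p i‖)
          - C*(n:ℝ)*(∑ i, ‖p i‖*‖q i‖) - (n:ℝ)*(2*C₁+C₃*‖q₀‖^2) := by
        have hsnQ0 : 0 ≤ Real.sqrt n * Q := mul_nonneg hsn0.le hQ0
        rw [hq2]
        linarith
      have := hsumle q hq
      linarith
  -- put everything together
  simp only [HamN, HamNm]
  congr 1
  exact sInf_eq_sInf_trunc
    (fun i r => ⟪f₁ (x i) μ + f₂ (x i) μ r, (n:ℝ) • p i⟫ + (l₁ (x i) μ + l₂ (x i) μ r))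
    Λt (K * Real.sqrt n) hbdd hne h3

end
end

section
/- Suppose there is a constant C ≥ 0 such that |f₂(x,μ,q)| ≤ C(1+|q|_Λ) for all x ∈ H, μ ∈ 𝒫₂(H), q ∈ Λ̃, and there are constants C₁ ≥ 0 and C₂, C₃ > 0 such that −C₁ + C₂|q|²_Λ ≤ l₂(x,μ,q) ≤ C₁ + C₃|q|²_Λ for all x ∈ H, μ ∈ 𝒫₂(H), q ∈ Λ̃. Then for every C > 0 there exists a constant K > 0 such that 𝓗(x,μ,p) = 𝓗^K(x,μ,p) for all μ ∈ 𝒫₂(H) and all x, p ∈ H with |p| ≤ C. -/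
open MeasureTheory
open scoped RealInnerProductSpace ENNReal

section

variable {H : Type*} [NormedAddCommGroup H] [InnerProductSpace ℝ H] [CompleteSpace H]
  [SecondCountableTopology H] [MeasurableSpace H] [BorelSpace H]
variable {Λ : Type*} [NormedAddCommGroup Λ] [InnerProductSpace ℝ Λ] [CompleteSpace Λ]
  [SecondCountableTopology Λ]

/-- The Hamiltonian `𝓗(x,μ,p) = inf_{q ∈ Λ̃} (⟨f(x,μ,q), p⟩ + l(x,μ,q))`. -/
noncomputable def Ham (f : H → Measure H → Λ → H) (l : H → Measure H → Λ → ℝ)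
    (Λt : Set Λ) (x : H) (μ : Measure H) (p : H) : ℝ :=
  sInf ((fun q => ⟪f x μ q, p⟫ + l x μ q) '' Λt)

/-- The truncated Hamiltonian `𝓗ᵐ`, with the infimum restricted to `q ∈ Λ̃`, `|q|_Λ ≤ m`. -/
noncomputable def HamM (f : H → Measure H → Λ → H) (l : H → Measure H → Λ → ℝ)
    (Λt : Set Λ) (m : ℝ) (x : H) (μ : Measure H) (p : H) : ℝ :=
  sInf ((fun q => ⟪f x μ q, p⟫ + l x μ q) '' (Λt ∩ {q : Λ | ‖q‖ ≤ m}))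

set_option maxHeartbeats 800000 in
/-- Under the growth assumptions on `f₂` and `l₂`, for every `C > 0`
there is `K > 0` such that `𝓗(x,μ,p) = 𝓗ᴷ(x,μ,p)` for all `μ ∈ 𝒫₂(H)` and all
`x, p ∈ H` with `|p| ≤ C`. -/
theorem statement1
    (f₁ : H → Measure H → H) (f₂ : H → Measure H → Λ → H)
    (l₁ : H → Measure H → ℝ) (l₂ : H → Measure H → Λ → ℝ)
    (Λt : Set Λ) (hΛne : Λt.Nonempty) (hΛconv : Convex ℝ Λt)
    (C : ℝ) (hC : 0 ≤ C)
    (hf₂ : ∀ (x : H) (μ : Measure H) (q : Λ), IsP2 μ → q ∈ Λt →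
      ‖f₂ x μ q‖ ≤ C * (1 + ‖q‖))
    (C₁ C₂ C₃ : ℝ) (hC₁ : 0 ≤ C₁) (hC₂ : 0 < C₂) (hC₃ : 0 < C₃)
    (hl₂ : ∀ (x : H) (μ : Measure H) (q : Λ), IsP2 μ → q ∈ Λt →
      -C₁ + C₂ * ‖q‖ ^ 2 ≤ l₂ x μ q ∧ l₂ x μ q ≤ C₁ + C₃ * ‖q‖ ^ 2) :
    ∀ C' : ℝ, 0 < C' → ∃ K : ℝ, 0 < K ∧
      ∀ (μ : Measure H) (x p : H), IsP2 μ → ‖p‖ ≤ C' →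
        Ham (fun a ν q => f₁ a ν + f₂ a ν q) (fun a ν q => l₁ a ν + l₂ a ν q) Λt x μ p
          = HamM (fun a ν q => f₁ a ν + f₂ a ν q) (fun a ν q => l₁ a ν + l₂ a ν q)
              Λt K x μ p := by
  intro C' hC'
  obtain ⟨q₀, hq₀⟩ := hΛne
  set r := ‖q₀‖ with hr
  have hr0 : 0 ≤ r := norm_nonneg _
  set M : ℝ := 2*C₁ + 2*C*C' + C*C'*r + C₃*r^2 + 1 with hM
  have hM0 : 0 < M := by
    have h1 : 0 ≤ C*C' := mul_nonneg hC hC'.le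
    have h2 : 0 ≤ C*C'*r := mul_nonneg h1 hr0
    have h3 : 0 ≤ C₃*r^2 := mul_nonneg hC₃.le (sq_nonneg r)
    nlinarith
  set K : ℝ := max (r+1) ((C*C' + M)/C₂) with hKdef
  have hK1 : r + 1 ≤ K := le_max_left _ _
  have hK0 : 0 < K := lt_of_lt_of_le (by linarith) hK1
  have hKC₂ : C*C' + M ≤ K * C₂ := by
    have := le_max_right (r+1) ((C*C' + M)/C₂)
    have : (C*C' + M)/C₂ ≤ K := this
    calc C*C' + M = ((C*C' + M)/C₂) * C₂ := by field_simp
      _ ≤ K * C₂ := by nlinarith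
  refine ⟨K, hK0, ?_⟩
  intro μ x p hμ hp
  have hp0 : 0 ≤ ‖p‖ := norm_nonneg _
  set g : Λ → ℝ := fun q => ⟪f₁ x μ + f₂ x μ q, p⟫ + (l₁ x μ + l₂ x μ q) with hg
  set A : ℝ := ⟪f₁ x μ, p⟫ + l₁ x μ with hA
  -- lower bound on g over Λt
  have hglow : ∀ q ∈ Λt, A - C*C'*(1+‖q‖) - C₁ + C₂*‖q‖^2 ≤ g q := by
    intro q hq
    have habs := abs_real_inner_le_norm (f₂ x μ q) p
    have h1 : -(‖f₂ x μ q‖ * ‖p‖) ≤ ⟪f₂ x μ q, p⟫ := by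
      have := neg_abs_le (⟪f₂ x μ q, p⟫)
      linarith
    have h2 : ‖f₂ x μ q‖ * ‖p‖ ≤ C*(1+‖q‖)*C' := by
      apply mul_le_mul (hf₂ x μ q hμ hq) hp hp0
      positivity
    have h3 := (hl₂ x μ q hμ hq).1
    have : g q = A + ⟪f₂ x μ q, p⟫ + l₂ x μ q := by
      simp [hg, hA, inner_add_left]; ring
    rw [this]
    nlinarith
  have hlb : ∀ y ∈ g '' Λt, A - C*C' - C₁ - (C*C')^2/(4*C₂) ≤ y := by
    rintro _ ⟨q, hq, rfl⟩
    have := hglow q hq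
    have hn : 0 ≤ ‖q‖ := norm_nonneg _
    have key : -(C*C')^2/(4*C₂) ≤ C₂*‖q‖^2 - C*C'*‖q‖ := by
      rw [div_le_iff₀ (by linarith : (0:ℝ) < 4*C₂)]
      nlinarith [sq_nonneg (2*C₂*‖q‖ - C*C')]
    have : (0:ℝ) < 4*C₂ := by linarith
    have := key
    rw [neg_div] at this
    have h4 := hglow q hq
    clear_value A g K M r
    nlinarith [h4]
  have hbddfull : BddBelow (g '' Λt) := ⟨_, hlb⟩
  have hbddsub : BddBelow (g '' (Λt ∩ {q : Λ | ‖q‖ ≤ K})) :=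
    hbddfull.mono (Set.image_mono Set.inter_subset_left)
  have hq₀mem : q₀ ∈ Λt ∩ {q : Λ | ‖q‖ ≤ K} := ⟨hq₀, by simp; linarith⟩
  -- upper bound on g q₀
  have hgq₀ : g q₀ ≤ A + C*(1+r)*C' + C₁ + C₃*r^2 := by
    have h1 := real_inner_le_norm (f₂ x μ q₀) p
    have h2 : ‖f₂ x μ q₀‖ * ‖p‖ ≤ C*(1+r)*C' := by
      apply mul_le_mul (hf₂ x μ q₀ hμ hq₀) hp hp0
      positivity
    have h3 := (hl₂ x μ q₀ hμ hq₀).2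
    have : g q₀ = A + ⟪f₂ x μ q₀, p⟫ + l₂ x μ q₀ := by
      simp [hg, hA, inner_add_left]; ring
    rw [this]
    linarith
  -- key: for large q, g q ≥ g q₀
  have hbig : ∀ q ∈ Λt, K < ‖q‖ → g q₀ ≤ g q := by
    intro q hq hKq
    have h1 := hglow q hq
    have ht : K ≤ ‖q‖ := hKq.le
    have ht1 : 1 ≤ ‖q‖ := by linarith
    have hCq : C*C' + M ≤ C₂ * ‖q‖ := by
      calc C*C' + M ≤ K * C₂ := hKC₂
        _ ≤ ‖q‖ * C₂ := by nlinarith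
        _ = C₂ * ‖q‖ := mul_comm _ _
    have hmul := mul_le_mul_of_nonneg_right hCq (norm_nonneg q)
    have hMt : M * 1 ≤ M * ‖q‖ := mul_le_mul_of_nonneg_left ht1 hM0.le
    have hgq₀' := hgq₀
    clear_value A g K M r
    linarith [hmul, h1, hgq₀', hMt, hM.le, hM.ge]
  show sInf (g '' Λt) = sInf (g '' (Λt ∩ {q : Λ | ‖q‖ ≤ K}))
  apply le_antisymm
  · exact csInf_le_csInf hbddfull ⟨g q₀, Set.mem_image_of_mem g hq₀mem⟩
      (Set.image_mono Set.inter_subset_left)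
  · apply le_csInf ⟨g q₀, Set.mem_image_of_mem g hq₀⟩
    rintro _ ⟨q, hq, rfl⟩
    by_cases h : ‖q‖ ≤ K
    · exact csInf_le hbddsub (Set.mem_image_of_mem g ⟨hq, h⟩)
    · calc sInf (g '' (Λt ∩ {q : Λ | ‖q‖ ≤ K})) ≤ g q₀ :=
            csInf_le hbddsub (Set.mem_image_of_mem g hq₀mem)
        _ ≤ g q := hbig q hq (lt_of_not_ge h)

end
end

section
/- Under Assumptions (Af) and (Al), there is a constant C' ≥ 0 such that |𝓗(x,μ,p) − 𝓗(x,μ,p')| ≤ C'(1 + |x| + 𝓜_r(μ)^{1/r} + |p| + |p'|)·|p − p'| for all x ∈ H, μ ∈ 𝒫₂(H), and p, p' ∈ H. -/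
open MeasureTheory
open scoped RealInnerProductSpace ENNReal

section

variable {H : Type*} [NormedAddCommGroup H] [InnerProductSpace ℝ H] [CompleteSpace H]
  [SecondCountableTopology H] [MeasurableSpace H] [BorelSpace H]
variable {Λ : Type*} [NormedAddCommGroup Λ] [InnerProductSpace ℝ Λ] [CompleteSpace Λ]
  [SecondCountableTopology Λ] [MeasurableSpace Λ] [BorelSpace Λ]

/-- The `r`-Wasserstein distance `d_r` on probability measures on `H`. -/
noncomputable def dr (r : ℝ) (μ β : Measure H) : ℝ :=
  sInf { c : ℝ | ∃ γ : Measure (H × H), IsProbabilityMeasure γ ∧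
      γ.map Prod.fst = μ ∧ γ.map Prod.snd = β ∧
      c = (∫ p, ‖p.1 - p.2‖ ^ r ∂γ) ^ (1 / r) }

/-- The weak norm `|x|_{-1} = ⟨Bx, x⟩^{1/2}`. -/
noncomputable def nrmB (B : H →L[ℝ] H) (x : H) : ℝ := Real.sqrt ⟪B x, x⟫

/-- The `r`-Wasserstein distance `d_{-1,r}` with respect to the weak norm `|·|_{-1}`. -/
noncomputable def drB (B : H →L[ℝ] H) (r : ℝ) (μ β : Measure H) : ℝ :=
  sInf { c : ℝ | ∃ γ : Measure (H × H), IsProbabilityMeasure γ ∧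
      γ.map Prod.fst = μ ∧ γ.map Prod.snd = β ∧
      c = (∫ p, nrmB B (p.1 - p.2) ^ r ∂γ) ^ (1 / r) }

set_option maxHeartbeats 1000000 in
/-- Under Assumptions (Af) and (Al), the Hamiltonian is locally Lipschitz
in `p`: `|𝓗(x,μ,p) − 𝓗(x,μ,p')| ≤ C'(1 + |x| + 𝓜_r(μ)^{1/r} + |p| + |p'|)·|p − p'|`. -/
theorem statement2
    (r : ℝ) (hr1 : 1 ≤ r) (hr2 : r < 2)
    (B : H →L[ℝ] H)
    (hBsa : ∀ x y : H, ⟪B x, y⟫ = ⟪x, B y⟫)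
    (hBpos : ∀ x : H, x ≠ 0 → 0 < ⟪B x, x⟫)
    (f₁ : H → Measure H → H) (f₂ : H → Measure H → Λ → H)
    (l₁ : H → Measure H → ℝ) (l₂ : H → Measure H → Λ → ℝ)
    (Λt : Set Λ) (hΛne : Λt.Nonempty) (hΛconv : Convex ℝ Λt)
    -- Assumption (Af)
    (Cf : ℝ) (hCf : 0 ≤ Cf)
    (hf_lip : ∀ (x y : H) (μ β : Measure H) (q : Λ), IsP2 μ → IsP2 β → q ∈ Λt →
      ‖f₁ x μ - f₁ y β‖ + ‖f₂ x μ q - f₂ y β q‖ ≤ Cf * (‖x - y‖ + dr r μ β))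
    (hf₂bd : ∀ (x : H) (μ : Measure H) (q : Λ), IsP2 μ → q ∈ Λt →
      ‖f₂ x μ q‖ ≤ Cf * (1 + ‖q‖))
    -- Assumption (Al)
    (Cl : ℝ) (hCl : 0 ≤ Cl)
    (hl_lip : ∀ (x y : H) (μ β : Measure H) (q : Λ), IsP2 μ → IsP2 β → q ∈ Λt →
      |l₁ x μ - l₁ y β| + |l₂ x μ q - l₂ y β q| ≤ Cl * (nrmB B (x - y) + drB B r μ β))
    (C₁ C₂ C₃ : ℝ) (hC₁ : 0 ≤ C₁) (hC₂ : 0 < C₂) (hC₃ : 0 < C₃)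
    (hl₂bd : ∀ (x : H) (μ : Measure H) (q : Λ), IsP2 μ → q ∈ Λt →
      -C₁ + C₂ * ‖q‖ ^ 2 ≤ l₂ x μ q ∧ l₂ x μ q ≤ C₁ + C₃ * ‖q‖ ^ 2)
    :
    ∃ C' : ℝ, 0 ≤ C' ∧ ∀ (x : H) (μ : Measure H) (p p' : H), IsP2 μ →
      |Ham (fun a ν q => f₁ a ν + f₂ a ν q) (fun a ν q => l₁ a ν + l₂ a ν q) Λt x μ p -
          Ham (fun a ν q => f₁ a ν + f₂ a ν q) (fun a ν q => l₁ a ν + l₂ a ν q) Λt x μ p'|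
        ≤ C' * (1 + ‖x‖ + (∫ y, ‖y‖ ^ r ∂μ) ^ (1 / r) + ‖p‖ + ‖p'‖) * ‖p - p'‖
       := by
  classical
  obtain ⟨q₀, hq₀⟩ := hΛne
  have hr0 : (0:ℝ) < r := lt_of_lt_of_le one_pos hr1
  -- the Dirac measure at 0 is in P2
  set δ : Measure H := Measure.dirac 0 with hδdef
  have hδP2 : IsP2 δ := by
    refine ⟨by infer_instance, ?_⟩
    have : (∫⁻ x, (‖x‖₊ : ℝ≥0∞) ^ 2 ∂δ) = (‖(0:H)‖₊ : ℝ≥0∞) ^ 2 :=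
      lintegral_dirac' _ ((measurable_nnnorm.coe_nnreal_ennreal).pow_const 2)
    rw [this]; simp
  set A : ℝ := ‖f₁ 0 δ‖ with hAdef
  have hA : 0 ≤ A := norm_nonneg _
  set D : ℝ := 2*C₁ + C₃*‖q₀‖^2 + 1 + Cf*(2+‖q₀‖) with hDdef
  have hD : 0 ≤ D := by positivity
  set E : ℝ := (Cf + D)/C₂ with hEdef
  have hE : 0 ≤ E := by positivity
  have hCE : C₂ * E = Cf + D := by
    rw [hEdef]; field_simp
  refine ⟨A + 3*Cf + Cf*E, by positivity, ?_⟩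
  intro x μ p p' hμ
  set Mr : ℝ := (∫ y, ‖y‖ ^ r ∂μ) ^ (1/r) with hMrdef
  have hMr0 : 0 ≤ Mr := by
    apply Real.rpow_nonneg
    exact integral_nonneg fun y => Real.rpow_nonneg (norm_nonneg y) r
  -- d_r(μ, δ₀) ≤ Mr
  have hdr : dr r μ δ ≤ Mr := by
    haveI : IsProbabilityMeasure μ := hμ.1
    have hφm : Measurable (fun y : H => (y, (0:H))) :=
      measurable_id.prodMk measurable_const
    have hγ : IsProbabilityMeasure (μ.map (fun y : H => (y, (0:H)))) :=
      Measure.isProbabilityMeasure_map hφm.aemeasurable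
    have hgc : Continuous (fun z : H × H => ‖z.1 - z.2‖ ^ r) := by
      apply Continuous.rpow_const
      · exact (continuous_fst.sub continuous_snd).norm
      · intro z; exact Or.inr (le_of_lt hr0)
    apply csInf_le
    · refine ⟨0, ?_⟩
      rintro c ⟨γ, hγp, h1, h2, rfl⟩
      exact Real.rpow_nonneg
        (integral_nonneg fun z => Real.rpow_nonneg (norm_nonneg _) r) _
    · refine ⟨μ.map (fun y : H => (y, (0:H))), hγ, ?_, ?_, ?_⟩
      · rw [Measure.map_map measurable_fst hφm]
        rw [show (Prod.fst ∘ fun y : H => (y, (0:H))) = id from rfl, Measure.map_id]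
      · rw [Measure.map_map measurable_snd hφm]
        have : ((fun z : H × H => z.2) ∘ (fun y : H => (y, (0:H)))) = fun _ : H => (0:H) := rfl
        rw [show (Prod.snd ∘ (fun y : H => (y, (0:H)))) = fun _ : H => (0:H) from rfl]
        rw [Measure.map_const]
        simp [hδdef]
      · rw [integral_map hφm.aemeasurable hgc.aestronglyMeasurable]
        simp [hMrdef]
  -- bound on ‖f₁ x μ‖
  have hf₁bd : ‖f₁ x μ‖ ≤ A + Cf*(‖x‖ + Mr) := by
    have h := hf_lip x 0 μ δ q₀ hμ hδP2 hq₀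
    have h1 : ‖f₁ x μ - f₁ 0 δ‖ ≤ Cf * (‖x - 0‖ + dr r μ δ) := by
      have := norm_nonneg (f₂ x μ q₀ - f₂ 0 δ q₀); linarith
    have h2 : ‖f₁ x μ‖ - ‖f₁ 0 δ‖ ≤ ‖f₁ x μ - f₁ 0 δ‖ := norm_sub_norm_le _ _
    have h3 : Cf * (‖x - 0‖ + dr r μ δ) ≤ Cf * (‖x‖ + Mr) := by
      rw [sub_zero]
      exact mul_le_mul_of_nonneg_left (by linarith) hCf
    rw [hAdef]; linarith
  -- notation for the objective
  set F : Λ → H := fun q => f₁ x μ + f₂ x μ q with hFdef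
  set φ : H → Λ → ℝ := fun w q => ⟪F q, w⟫ + (l₁ x μ + l₂ x μ q) with hφdef
  have hHam : ∀ w : H,
      Ham (fun a ν q => f₁ a ν + f₂ a ν q) (fun a ν q => l₁ a ν + l₂ a ν q) Λt x μ w
        = sInf (φ w '' Λt) := fun w => rfl
  have hFnorm : ∀ q : Λ, ‖F q‖ ≤ ‖f₁ x μ‖ + ‖f₂ x μ q‖ := fun q => norm_add_le _ _
  clear_value δ A D E Mr F φ
  -- pointwise bounds on the objective
  have hf₂q : ∀ q ∈ Λt, ‖f₂ x μ q‖ ≤ Cf * (1 + ‖q‖) := fun q hq => hf₂bd x μ q hμ hq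
  have hφlb : ∀ (w : H) (q : Λ), q ∈ Λt →
      ⟪f₁ x μ, w⟫ + l₁ x μ - Cf*(1+‖q‖)*‖w‖ - C₁ + C₂*‖q‖^2 ≤ φ w q := by
    intro w q hq
    have h1 : ⟪f₂ x μ q, w⟫ ≥ -(Cf*(1+‖q‖)*‖w‖) := by
      have := abs_real_inner_le_norm (f₂ x μ q) w
      have h2 : ‖f₂ x μ q‖ * ‖w‖ ≤ Cf*(1+‖q‖)*‖w‖ :=
        mul_le_mul_of_nonneg_right (hf₂q q hq) (norm_nonneg w)
      have := abs_le.mp this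
      linarith [this.1]
    have h3 := (hl₂bd x μ q hμ hq).1
    have : φ w q = ⟪f₁ x μ, w⟫ + ⟪f₂ x μ q, w⟫ + l₁ x μ + l₂ x μ q := by
      simp only [hφdef, hFdef, inner_add_left]; ring
    rw [this]; linarith
  have hφub : ∀ (w : H) (q : Λ), q ∈ Λt →
      φ w q ≤ ⟪f₁ x μ, w⟫ + l₁ x μ + Cf*(1+‖q‖)*‖w‖ + C₁ + C₃*‖q‖^2 := by
    intro w q hq
    have h1 : ⟪f₂ x μ q, w⟫ ≤ Cf*(1+‖q‖)*‖w‖ := by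
      have := abs_real_inner_le_norm (f₂ x μ q) w
      have h2 : ‖f₂ x μ q‖ * ‖w‖ ≤ Cf*(1+‖q‖)*‖w‖ :=
        mul_le_mul_of_nonneg_right (hf₂q q hq) (norm_nonneg w)
      have := abs_le.mp this
      linarith [this.2]
    have h3 := (hl₂bd x μ q hμ hq).2
    have : φ w q = ⟪f₁ x μ, w⟫ + ⟪f₂ x μ q, w⟫ + l₁ x μ + l₂ x μ q := by
      simp only [hφdef, hFdef, inner_add_left]; ring
    rw [this]; linarith
  have hbdd : ∀ w : H, BddBelow (φ w '' Λt) := by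
    intro w
    refine ⟨⟪f₁ x μ, w⟫ + l₁ x μ - C₁ - Cf*‖w‖ - (Cf*‖w‖)^2/(4*C₂), ?_⟩
    rintro c ⟨q, hq, rfl⟩
    have h1 := hφlb w q hq
    have hqn : (0:ℝ) ≤ ‖q‖ := norm_nonneg q
    have hwn : (0:ℝ) ≤ ‖w‖ := norm_nonneg w
    have hdiv : (0:ℝ) ≤ (2*C₂*‖q‖ - Cf*‖w‖)^2 / (4*C₂) := by positivity
    have heq2 : (2*C₂*‖q‖ - Cf*‖w‖)^2 / (4*C₂)
        = C₂*‖q‖^2 - Cf*‖w‖*‖q‖ + (Cf*‖w‖)^2/(4*C₂) := by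
      field_simp; ring
    rw [heq2] at hdiv
    nlinarith [mul_nonneg hCf hwn]
  have hne : ∀ w : H, (φ w '' Λt).Nonempty := fun w => ⟨φ w q₀, q₀, hq₀, rfl⟩
  -- main one-sided estimate
  have key : ∀ u v : H,
      sInf (φ u '' Λt) - sInf (φ v '' Λt)
        ≤ (A + 3*Cf + Cf*E) * (1 + ‖x‖ + Mr + ‖u‖ + ‖v‖) * ‖u - v‖ := by
    intro u v
    have hS1 : (1:ℝ) ≤ 1 + ‖x‖ + Mr + ‖u‖ + ‖v‖ := by
      have := norm_nonneg x; have := norm_nonneg u; have := norm_nonneg v; linarith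
    refine le_of_forall_pos_le_add fun ε hε => ?_
    set ε' : ℝ := min ε 1 with hε'def
    have hε'0 : 0 < ε' := lt_min hε one_pos
    have hε'1 : ε' ≤ 1 := min_le_right _ _
    have hε'ε : ε' ≤ ε := min_le_left _ _
    obtain ⟨c, ⟨q, hq, rfl⟩, hclt⟩ := Real.lt_sInf_add_pos (hne v) hε'0
    -- bound on the norm of the near-minimizer q
    have hqbd : ‖q‖ ≤ 1 + E * (1 + ‖v‖) := by
      have h0 : sInf (φ v '' Λt) ≤ φ v q₀ := csInf_le (hbdd v) ⟨q₀, hq₀, rfl⟩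
      have h1 : φ v q ≤ φ v q₀ + 1 := by linarith
      have h2 := hφlb v q hq
      have h3 := hφub v q₀ hq₀
      have hvn : (0:ℝ) ≤ ‖v‖ := norm_nonneg v
      have hq0n : (0:ℝ) ≤ ‖q₀‖ := norm_nonneg q₀
      have hkey : C₂*‖q‖^2 ≤ Cf*(1+‖q‖)*‖v‖ + Cf*(1+‖q₀‖)*‖v‖ + 2*C₁ + C₃*‖q₀‖^2 + 1 := by
        linarith
      have hquad : C₂*‖q‖^2 ≤ Cf*‖v‖*‖q‖ + D*(1+‖v‖) := by
        rw [hDdef]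
        nlinarith [hkey, mul_nonneg hC₁ hvn,
          mul_nonneg (mul_nonneg hC₃.le (sq_nonneg ‖q₀‖)) hvn]
      rcases le_or_gt ‖q‖ 1 with h | h
      · nlinarith [mul_nonneg hE (by linarith [norm_nonneg v] : (0:ℝ) ≤ 1 + ‖v‖)]
      · have h4 : C₂*‖q‖ ≤ Cf*‖v‖ + D*(1+‖v‖) := by
          nlinarith [mul_pos hC₂ (by linarith : (0:ℝ) < ‖q‖ - 1),
            mul_nonneg hD hvn]
        have h6 : C₂*(E*(1+‖v‖)) = (Cf+D)*(1+‖v‖) := by rw [← hCE]; ring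
        have h5 : C₂*‖q‖ ≤ C₂*(E*(1+‖v‖)) := by rw [h6]; nlinarith
        have := (mul_le_mul_iff_right₀ hC₂).mp h5
        linarith
    -- bound on ‖F q‖
    have hFbd : ‖F q‖ ≤ (A + 3*Cf + Cf*E) * (1 + ‖x‖ + Mr + ‖u‖ + ‖v‖) := by
      have h1 : ‖F q‖ ≤ ‖f₁ x μ‖ + ‖f₂ x μ q‖ := hFnorm q
      have h2 := hf₂q q hq
      have hxn : (0:ℝ) ≤ ‖x‖ := norm_nonneg x
      have hun : (0:ℝ) ≤ ‖u‖ := norm_nonneg u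
      have hvn : (0:ℝ) ≤ ‖v‖ := norm_nonneg v
      have h3 : ‖f₂ x μ q‖ ≤ Cf*(2 + E*(1+‖v‖)) :=
        le_trans h2 (mul_le_mul_of_nonneg_left (by linarith) hCf)
      nlinarith [mul_nonneg hCf hxn, mul_nonneg hCf hMr0, mul_nonneg hCf hun,
        mul_nonneg hCf hvn, mul_nonneg (mul_nonneg hCf hE) hun,
        mul_nonneg hA hxn, mul_nonneg hA hMr0, mul_nonneg hA hun, mul_nonneg hA hvn,
        mul_nonneg (mul_nonneg hCf hE) hxn, mul_nonneg (mul_nonneg hCf hE) hMr0]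
    have hdiff : φ u q - φ v q ≤ ‖F q‖ * ‖u - v‖ := by
      have : φ u q - φ v q = ⟪F q, u - v⟫ := by
        simp only [hφdef, inner_sub_right]; ring
      rw [this]
      calc ⟪F q, u - v⟫ ≤ |⟪F q, u - v⟫| := le_abs_self _
        _ ≤ ‖F q‖ * ‖u - v‖ := abs_real_inner_le_norm _ _
    have hHu : sInf (φ u '' Λt) ≤ φ u q := csInf_le (hbdd u) ⟨q, hq, rfl⟩
    have hmul : ‖F q‖ * ‖u - v‖
        ≤ (A + 3*Cf + Cf*E) * (1 + ‖x‖ + Mr + ‖u‖ + ‖v‖) * ‖u - v‖ :=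
      mul_le_mul_of_nonneg_right hFbd (norm_nonneg _)
    linarith
  rw [abs_sub_le_iff]
  constructor
  · have := key p p'
    simpa [hHam] using this
  · have := key p' p
    rw [norm_sub_rev p' p] at this
    have heq : (1 + ‖x‖ + Mr + ‖p'‖ + ‖p‖) = (1 + ‖x‖ + Mr + ‖p‖ + ‖p'‖) := by ring
    rw [heq] at this
    simpa [hHam] using this

end
end

section
/- Under Assumptions (Af) and (Al), there is a constant C' ≥ 0 such that |𝓗(x,μ,p) − 𝓗(y,β,p)| ≤ C'(|x−y| + d_r(μ,β))·(1 + |p|) for all x, y ∈ H, μ, β ∈ 𝒫₂(H), and p ∈ H. -/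
open MeasureTheory
open scoped RealInnerProductSpace ENNReal

set_option linter.unusedSectionVars false

section

variable {H : Type*} [NormedAddCommGroup H] [InnerProductSpace ℝ H] [CompleteSpace H]
  [SecondCountableTopology H] [MeasurableSpace H] [BorelSpace H]
variable {Λ : Type*} [NormedAddCommGroup Λ] [InnerProductSpace ℝ Λ] [CompleteSpace Λ]
  [SecondCountableTopology Λ] [MeasurableSpace Λ] [BorelSpace Λ]

/- ### Auxiliary lemmas -/

lemma dr_nonneg' (r : ℝ) (μ β : Measure H) : 0 ≤ dr r μ β := by
  apply Real.sInf_nonneg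
  rintro c ⟨γ, _, _, _, rfl⟩
  exact Real.rpow_nonneg
    (integral_nonneg fun p => Real.rpow_nonneg (norm_nonneg _) _) _

lemma norm_sub_rpow_le' {r : ℝ} (hr1 : 1 ≤ r) (hr2 : r ≤ 2) (a b : H) :
    ‖a - b‖ ^ r ≤ 2 + 2 * ‖a‖ ^ 2 + 2 * ‖b‖ ^ 2 := by
  have h0 : (0 : ℝ) ≤ ‖a - b‖ := norm_nonneg _
  have ht : (0 : ℝ) ≤ ‖a‖ + ‖b‖ := by positivity
  have h1 : ‖a - b‖ ^ r ≤ (‖a‖ + ‖b‖) ^ r :=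
    Real.rpow_le_rpow h0 (norm_sub_le _ _) (by linarith)
  have h2 : (‖a‖ + ‖b‖) ^ r ≤ 1 + (‖a‖ + ‖b‖) ^ 2 := by
    rcases le_total (‖a‖ + ‖b‖) 1 with h | h
    · have := Real.rpow_le_one ht h (le_trans zero_le_one hr1)
      nlinarith [sq_nonneg (‖a‖ + ‖b‖)]
    · have h3 := Real.rpow_le_rpow_of_exponent_le h hr2
      rw [show ((2 : ℝ)) = ((2 : ℕ) : ℝ) by norm_num, Real.rpow_natCast] at h3
      nlinarith
  nlinarith [sq_nonneg (‖a‖ - ‖b‖)]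

lemma integrable_norm_sq_of_P2 {μ : Measure H} (hμ : IsP2 μ) :
    Integrable (fun x : H => ‖x‖ ^ 2) μ := by
  refine ⟨(measurable_norm.pow_const 2).aestronglyMeasurable, ?_⟩
  rw [hasFiniteIntegral_def]
  have h : ∀ x : H, (‖‖x‖ ^ 2‖₊ : ℝ≥0∞) = (‖x‖₊ : ℝ≥0∞) ^ 2 := by
    intro x
    rw [nnnorm_pow, nnnorm_norm, ENNReal.coe_pow]
  simp only [enorm_eq_nnnorm, h]
  exact hμ.2

lemma integrable_cost' {r : ℝ} (hr1 : 1 ≤ r) (hr2 : r ≤ 2) {μ β : Measure H}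
    (hμ : IsP2 μ) (hβ : IsP2 β) {γ : Measure (H × H)} (hγ : IsProbabilityMeasure γ)
    (h1 : γ.map Prod.fst = μ) (h2 : γ.map Prod.snd = β) :
    Integrable (fun p : H × H => ‖p.1 - p.2‖ ^ r) γ := by
  have i1 : Integrable (fun p : H × H => ‖p.1‖ ^ 2) γ := by
    have h := (h1 ▸ integrable_norm_sq_of_P2 hμ :
        Integrable (fun x : H => ‖x‖ ^ 2) (γ.map Prod.fst)).comp_aemeasurable
      measurable_fst.aemeasurable
    exact h
  have i2 : Integrable (fun p : H × H => ‖p.2‖ ^ 2) γ := by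
    have h := (h2 ▸ integrable_norm_sq_of_P2 hβ :
        Integrable (fun x : H => ‖x‖ ^ 2) (γ.map Prod.snd)).comp_aemeasurable
      measurable_snd.aemeasurable
    exact h
  have hg : Integrable (fun p : H × H => 2 + 2 * ‖p.1‖ ^ 2 + 2 * ‖p.2‖ ^ 2) γ :=
    ((integrable_const (2 : ℝ)).add (i1.const_mul 2)).add (i2.const_mul 2)
  refine hg.mono' ?_ ?_
  · exact ((continuous_fst.sub continuous_snd).norm.rpow_const
      (fun x => Or.inr (by linarith))).aestronglyMeasurable
  · filter_upwards with p
    rw [Real.norm_eq_abs, abs_of_nonneg (Real.rpow_nonneg (norm_nonneg _) _)]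
    exact norm_sub_rpow_le' hr1 hr2 _ _

lemma nrmB_le' (B : H →L[ℝ] H) (z : H) : nrmB B z ≤ Real.sqrt ‖B‖ * ‖z‖ := by
  rw [nrmB]
  have h1 : ⟪B z, z⟫ ≤ ‖B‖ * ‖z‖ * ‖z‖ := by
    refine (real_inner_le_norm _ _).trans ?_
    have := B.le_opNorm z
    nlinarith [norm_nonneg z]
  calc Real.sqrt ⟪B z, z⟫ ≤ Real.sqrt (‖B‖ * ‖z‖ * ‖z‖) := Real.sqrt_le_sqrt h1
    _ = Real.sqrt ‖B‖ * ‖z‖ := by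
        rw [mul_assoc, Real.sqrt_mul (norm_nonneg _),
          Real.sqrt_mul_self (norm_nonneg _)]

lemma drB_le_dr' {r : ℝ} (hr1 : 1 ≤ r) (hr2 : r ≤ 2) (B : H →L[ℝ] H)
    {μ β : Measure H} (hμ : IsP2 μ) (hβ : IsP2 β) :
    drB B r μ β ≤ (1 + Real.sqrt ‖B‖) * dr r μ β := by
  set K := 1 + Real.sqrt ‖B‖ with hKdef
  have hK0 : (0 : ℝ) < K := by positivity
  have hr0 : (0 : ℝ) < r := by linarith
  have hbddB : BddBelow { c : ℝ | ∃ γ : Measure (H × H), IsProbabilityMeasure γ ∧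
      γ.map Prod.fst = μ ∧ γ.map Prod.snd = β ∧
      c = (∫ p, nrmB B (p.1 - p.2) ^ r ∂γ) ^ (1 / r) } := by
    refine ⟨0, ?_⟩
    rintro c ⟨γ, _, _, _, rfl⟩
    exact Real.rpow_nonneg
      (integral_nonneg fun p => Real.rpow_nonneg (Real.sqrt_nonneg _) _) _
  haveI := hμ.1
  haveI := hβ.1
  have hne : ∃ c, c ∈ { c : ℝ | ∃ γ : Measure (H × H), IsProbabilityMeasure γ ∧
      γ.map Prod.fst = μ ∧ γ.map Prod.snd = β ∧
      c = (∫ p, ‖p.1 - p.2‖ ^ r ∂γ) ^ (1 / r) } := by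
    refine ⟨_, μ.prod β, inferInstance, ?_, ?_, rfl⟩
    · simp [Measure.map_fst_prod, measure_univ]
    · simp [Measure.map_snd_prod, measure_univ]
  rw [mul_comm, ← div_le_iff₀ hK0]
  rw [dr]
  refine le_csInf hne ?_
  rintro c ⟨γ, hγ, h1, h2, rfl⟩
  rw [div_le_iff₀ hK0, mul_comm]
  have hmem : (∫ p, nrmB B (p.1 - p.2) ^ r ∂γ) ^ (1 / r) ∈
      { c : ℝ | ∃ γ : Measure (H × H), IsProbabilityMeasure γ ∧
        γ.map Prod.fst = μ ∧ γ.map Prod.snd = β ∧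
        c = (∫ p, nrmB B (p.1 - p.2) ^ r ∂γ) ^ (1 / r) } := ⟨γ, hγ, h1, h2, rfl⟩
  refine (csInf_le hbddB hmem).trans ?_
  -- now compare the two costs for the same coupling
  have hint : Integrable (fun p : H × H => ‖p.1 - p.2‖ ^ r) γ :=
    integrable_cost' hr1 hr2 hμ hβ hγ h1 h2
  have hintK : Integrable (fun p : H × H => K ^ r * ‖p.1 - p.2‖ ^ r) γ :=
    hint.const_mul _
  have hmono : (∫ p, nrmB B (p.1 - p.2) ^ r ∂γ) ≤
      ∫ p, K ^ r * ‖p.1 - p.2‖ ^ r ∂γ := by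
    refine integral_mono_of_nonneg ?_ hintK ?_
    · filter_upwards with p
      exact Real.rpow_nonneg (Real.sqrt_nonneg _) _
    · filter_upwards with p
      have hb : nrmB B (p.1 - p.2) ≤ K * ‖p.1 - p.2‖ := by
        refine (nrmB_le' B _).trans ?_
        have : Real.sqrt ‖B‖ ≤ K := by rw [hKdef]; linarith
        exact mul_le_mul_of_nonneg_right this (norm_nonneg _)
      calc nrmB B (p.1 - p.2) ^ r ≤ (K * ‖p.1 - p.2‖) ^ r :=
            Real.rpow_le_rpow (Real.sqrt_nonneg _) hb hr0.le
        _ = K ^ r * ‖p.1 - p.2‖ ^ r := Real.mul_rpow hK0.le (norm_nonneg _)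
  have heq : (∫ p, K ^ r * ‖p.1 - p.2‖ ^ r ∂γ) =
      K ^ r * ∫ p, ‖p.1 - p.2‖ ^ r ∂γ := integral_const_mul _ _
  have hI0 : 0 ≤ ∫ p, ‖p.1 - p.2‖ ^ r ∂γ :=
    integral_nonneg fun p => Real.rpow_nonneg (norm_nonneg _) _
  calc (∫ p, nrmB B (p.1 - p.2) ^ r ∂γ) ^ (1 / r)
      ≤ (K ^ r * ∫ p, ‖p.1 - p.2‖ ^ r ∂γ) ^ (1 / r) := by
        refine Real.rpow_le_rpow ?_ (hmono.trans heq.le) (by positivity)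
        exact integral_nonneg fun p => Real.rpow_nonneg (Real.sqrt_nonneg _) _
    _ = K * (∫ p, ‖p.1 - p.2‖ ^ r ∂γ) ^ (1 / r) := by
        rw [Real.mul_rpow (Real.rpow_nonneg hK0.le _) hI0,
          ← Real.rpow_mul hK0.le, mul_one_div_cancel hr0.ne', Real.rpow_one]

lemma quad_lb' (a c t : ℝ) (hc : 0 < c) : -(a ^ 2 / (4 * c)) ≤ c * t ^ 2 - a * t := by
  rw [neg_le, neg_sub, le_div_iff₀ (by positivity)]
  nlinarith [sq_nonneg (a - 2 * c * t)]

lemma abs_csInf_image_sub' {α : Type*} {s : Set α} (hs : s.Nonempty) {g₁ g₂ : α → ℝ}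
    (h₁ : BddBelow (g₁ '' s)) (h₂ : BddBelow (g₂ '' s)) {M : ℝ}
    (hM : ∀ q ∈ s, |g₁ q - g₂ q| ≤ M) :
    |sInf (g₁ '' s) - sInf (g₂ '' s)| ≤ M := by
  have key : ∀ u v : α → ℝ, BddBelow (u '' s) → (∀ q ∈ s, u q - v q ≤ M) →
      sInf (u '' s) - M ≤ sInf (v '' s) := by
    intro u v hu huv
    refine le_csInf (hs.image v) ?_
    rintro b ⟨q, hq, rfl⟩
    have h := csInf_le hu ⟨q, hq, rfl⟩
    have := huv q hq
    linarith
  have h12 := key g₁ g₂ h₁ fun q hq => (abs_le.1 (hM q hq)).2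
  have h21 := key g₂ g₁ h₂ fun q hq => by have := (abs_le.1 (hM q hq)).1; linarith
  rw [abs_sub_le_iff]
  exact ⟨by linarith, by linarith⟩

/-- Under Assumptions (Af) and (Al), the Hamiltonian is Lipschitz in
`(x,μ)`: `|𝓗(x,μ,p) − 𝓗(y,β,p)| ≤ C'(|x−y| + d_r(μ,β))·(1 + |p|)`. -/
theorem statement3
    (r : ℝ) (hr1 : 1 ≤ r) (hr2 : r < 2)
    (B : H →L[ℝ] H)
    (hBsa : ∀ x y : H, ⟪B x, y⟫ = ⟪x, B y⟫)
    (hBpos : ∀ x : H, x ≠ 0 → 0 < ⟪B x, x⟫)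
    (f₁ : H → Measure H → H) (f₂ : H → Measure H → Λ → H)
    (l₁ : H → Measure H → ℝ) (l₂ : H → Measure H → Λ → ℝ)
    (Λt : Set Λ) (hΛne : Λt.Nonempty) (hΛconv : Convex ℝ Λt)
    -- Assumption (Af)
    (Cf : ℝ) (hCf : 0 ≤ Cf)
    (hf_lip : ∀ (x y : H) (μ β : Measure H) (q : Λ), IsP2 μ → IsP2 β → q ∈ Λt →
      ‖f₁ x μ - f₁ y β‖ + ‖f₂ x μ q - f₂ y β q‖ ≤ Cf * (‖x - y‖ + dr r μ β))
    (hf₂bd : ∀ (x : H) (μ : Measure H) (q : Λ), IsP2 μ → q ∈ Λt →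
      ‖f₂ x μ q‖ ≤ Cf * (1 + ‖q‖))
    -- Assumption (Al)
    (Cl : ℝ) (hCl : 0 ≤ Cl)
    (hl_lip : ∀ (x y : H) (μ β : Measure H) (q : Λ), IsP2 μ → IsP2 β → q ∈ Λt →
      |l₁ x μ - l₁ y β| + |l₂ x μ q - l₂ y β q| ≤ Cl * (nrmB B (x - y) + drB B r μ β))
    (C₁ C₂ C₃ : ℝ) (hC₁ : 0 ≤ C₁) (hC₂ : 0 < C₂) (hC₃ : 0 < C₃)
    (hl₂bd : ∀ (x : H) (μ : Measure H) (q : Λ), IsP2 μ → q ∈ Λt →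
      -C₁ + C₂ * ‖q‖ ^ 2 ≤ l₂ x μ q ∧ l₂ x μ q ≤ C₁ + C₃ * ‖q‖ ^ 2)
    :
    ∃ C' : ℝ, 0 ≤ C' ∧ ∀ (x y : H) (μ β : Measure H) (p : H), IsP2 μ → IsP2 β →
      |Ham (fun a ν q => f₁ a ν + f₂ a ν q) (fun a ν q => l₁ a ν + l₂ a ν q) Λt x μ p -
          Ham (fun a ν q => f₁ a ν + f₂ a ν q) (fun a ν q => l₁ a ν + l₂ a ν q) Λt y β p|
        ≤ C' * (‖x - y‖ + dr r μ β) * (1 + ‖p‖) := by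
  have hK0 : (0 : ℝ) < 1 + Real.sqrt ‖B‖ := by positivity
  refine ⟨Cf + Cl * (1 + Real.sqrt ‖B‖), by positivity, ?_⟩
  intro x y μ β p hμ hβ
  set K := 1 + Real.sqrt ‖B‖ with hKdef
  have hdr : 0 ≤ dr r μ β := dr_nonneg' r μ β
  have hD0 : 0 ≤ ‖x - y‖ + dr r μ β := add_nonneg (norm_nonneg _) hdr
  -- lower bounds: the images are bounded below
  have hbdd : ∀ (z : H) (ν : Measure H), IsP2 ν →
      BddBelow ((fun q => ⟪f₁ z ν + f₂ z ν q, p⟫ + (l₁ z ν + l₂ z ν q)) '' Λt) := by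
    intro z ν hν
    refine ⟨l₁ z ν - C₁ - ‖f₁ z ν‖ * ‖p‖ - Cf * ‖p‖ - (Cf * ‖p‖) ^ 2 / (4 * C₂), ?_⟩
    rintro b ⟨q, hq, rfl⟩
    have hip : -(‖f₁ z ν + f₂ z ν q‖ * ‖p‖) ≤ ⟪f₁ z ν + f₂ z ν q, p⟫ :=
      (abs_le.1 (abs_real_inner_le_norm _ _)).1
    have hf2 := hf₂bd z ν q hν hq
    have hl2 := (hl₂bd z ν q hν hq).1
    have htri : ‖f₁ z ν + f₂ z ν q‖ ≤ ‖f₁ z ν‖ + ‖f₂ z ν q‖ := norm_add_le _ _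
    have hquad := quad_lb' (Cf * ‖p‖) C₂ ‖q‖ hC₂
    have hp0 : (0 : ℝ) ≤ ‖p‖ := norm_nonneg p
    have hq0 : (0 : ℝ) ≤ ‖q‖ := norm_nonneg q
    nlinarith [mul_le_mul_of_nonneg_right htri hp0,
      mul_le_mul_of_nonneg_right hf2 hp0]
  -- uniform per-q bound
  have hMq : ∀ q ∈ Λt,
      |(⟪f₁ x μ + f₂ x μ q, p⟫ + (l₁ x μ + l₂ x μ q)) -
        (⟪f₁ y β + f₂ y β q, p⟫ + (l₁ y β + l₂ y β q))| ≤
      (Cf + Cl * K) * (‖x - y‖ + dr r μ β) * (1 + ‖p‖) := by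
    intro q hq
    have hf := hf_lip x y μ β q hμ hβ hq
    have hl := hl_lip x y μ β q hμ hβ hq
    have hdrB : drB B r μ β ≤ K * dr r μ β := drB_le_dr' hr1 hr2.le B hμ hβ
    have hnB : nrmB B (x - y) ≤ Real.sqrt ‖B‖ * ‖x - y‖ := nrmB_le' B _
    have hsq : Real.sqrt ‖B‖ ≤ K := by rw [hKdef]; linarith
    have h1 : nrmB B (x - y) + drB B r μ β ≤ K * (‖x - y‖ + dr r μ β) := by
      have h2 : Real.sqrt ‖B‖ * ‖x - y‖ ≤ K * ‖x - y‖ :=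
        mul_le_mul_of_nonneg_right hsq (norm_nonneg _)
      have : K * (‖x - y‖ + dr r μ β) = K * ‖x - y‖ + K * dr r μ β := by ring
      rw [this]
      exact add_le_add (hnB.trans h2) hdrB
    have hdiff : (⟪f₁ x μ + f₂ x μ q, p⟫ + (l₁ x μ + l₂ x μ q)) -
        (⟪f₁ y β + f₂ y β q, p⟫ + (l₁ y β + l₂ y β q)) =
        ⟪(f₁ x μ + f₂ x μ q) - (f₁ y β + f₂ y β q), p⟫ +
          ((l₁ x μ - l₁ y β) + (l₂ x μ q - l₂ y β q)) := by
      rw [inner_sub_left]; ring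
    have hnorm : ‖(f₁ x μ + f₂ x μ q) - (f₁ y β + f₂ y β q)‖ ≤
        ‖f₁ x μ - f₁ y β‖ + ‖f₂ x μ q - f₂ y β q‖ := by
      have he : (f₁ x μ + f₂ x μ q) - (f₁ y β + f₂ y β q) =
          (f₁ x μ - f₁ y β) + (f₂ x μ q - f₂ y β q) := by abel
      rw [he]; exact norm_add_le _ _
    calc |(⟪f₁ x μ + f₂ x μ q, p⟫ + (l₁ x μ + l₂ x μ q)) -
        (⟪f₁ y β + f₂ y β q, p⟫ + (l₁ y β + l₂ y β q))|
        ≤ ‖(f₁ x μ + f₂ x μ q) - (f₁ y β + f₂ y β q)‖ * ‖p‖ +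
          (|l₁ x μ - l₁ y β| + |l₂ x μ q - l₂ y β q|) := by
          rw [hdiff]
          exact (abs_add_le _ _).trans
            (add_le_add (abs_real_inner_le_norm _ _) (abs_add_le _ _))
      _ ≤ (Cf * (‖x - y‖ + dr r μ β)) * ‖p‖ + Cl * (K * (‖x - y‖ + dr r μ β)) := by
          refine add_le_add
            (mul_le_mul_of_nonneg_right (hnorm.trans hf) (norm_nonneg p)) ?_
          exact hl.trans (mul_le_mul_of_nonneg_left h1 hCl)
      _ ≤ (Cf + Cl * K) * (‖x - y‖ + dr r μ β) * (1 + ‖p‖) := by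
          nlinarith [mul_nonneg hCf hD0, norm_nonneg p,
            mul_nonneg (mul_nonneg (mul_nonneg hCl hK0.le) hD0) (norm_nonneg p)]
  have := abs_csInf_image_sub' hΛne (hbdd x μ hμ) (hbdd y β hβ) hMq
  simpa only [Ham] using this

end
end

section
/- Let a, b ≥ 0 and let G : Y → ℝ be concave and satisfy −a(1+|p|) − b|p|² ≤ G(p) ≤ a(1+|p|) for all p ∈ Y. Then there exists a constant C ≥ 0, depending only on a and b, such that |G(p) − G(p')| ≤ C(1 + |p| + |p'|)·|p − p'| for all p, p' ∈ Y. -/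
open scoped RealInnerProductSpace

private lemma statement6_key {Y : Type*} [NormedAddCommGroup Y] [InnerProductSpace ℝ Y]
    (a b : ℝ) (ha : 0 ≤ a) (hb : 0 ≤ b) (G : Y → ℝ) (hG : ConcaveOn ℝ Set.univ G)
    (hbd : ∀ p : Y, -a * (1 + ‖p‖) - b * ‖p‖ ^ 2 ≤ G p ∧ G p ≤ a * (1 + ‖p‖))
    (p p' : Y) : G p - G p' ≤ (4 * (a + b)) * (1 + ‖p‖ + ‖p'‖) * ‖p - p'‖ := by
  rcases eq_or_ne p p' with rfl | hne
  · simp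
  set d := ‖p - p'‖ with hd
  have hd0 : 0 < d := by
    rw [hd]
    exact norm_pos_iff.mpr (sub_ne_zero_of_ne hne)
  set R := 1 + ‖p‖ + ‖p'‖ with hR
  have hR1 : 1 ≤ R := by
    have h1 := norm_nonneg p; have h2 := norm_nonneg p'; rw [hR]; linarith
  have hR0 : 0 < R := lt_of_lt_of_le one_pos hR1
  set q := p' + (R / d) • (p' - p) with hq
  have hqn : ‖q‖ ≤ 2 * R := by
    have h1 : ‖q‖ ≤ ‖p'‖ + ‖(R / d) • (p' - p)‖ := norm_add_le _ _
    have h2 : ‖(R / d) • (p' - p)‖ = (R / d) * d := by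
      rw [norm_smul, Real.norm_of_nonneg (by positivity), norm_sub_rev, ← hd]
    have h3 : (R / d) * d = R := by field_simp
    have h4 := norm_nonneg p
    rw [h2, h3] at h1
    rw [hR] at *
    linarith
  set l := R / (R + d) with hl'
  set m := d / (R + d) with hm'
  have hRd : 0 < R + d := by linarith
  have hl : 0 ≤ l := by positivity
  have hm : 0 ≤ m := by positivity
  have hlm : l + m = 1 := by rw [hl', hm']; field_simp
  have hcomb : l • p + m • q = p' := by
    rw [hq, hl', hm']
    match_scalars <;> field_simp <;> ring
  have hcon := hG.2 (Set.mem_univ p) (Set.mem_univ q) hl hm hlm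
  rw [hcomb] at hcon
  simp only [smul_eq_mul] at hcon
  have hGp := (hbd p).2
  have hGq := (hbd q).1
  have hbound : G p - G q ≤ 4 * a * R + 4 * b * R ^ 2 := by
    have h1 : G p ≤ a * R := le_trans hGp (by nlinarith [norm_nonneg p'])
    have hq2 : ‖q‖ ^ 2 ≤ 4 * R ^ 2 := by nlinarith [hqn, norm_nonneg q]
    have e1 : b * ‖q‖ ^ 2 ≤ b * (4 * R ^ 2) := mul_le_mul_of_nonneg_left hq2 hb
    have e2 : a * (1 + ‖q‖) ≤ a * (3 * R) :=
      mul_le_mul_of_nonneg_left (by linarith) ha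
    nlinarith [hGq, e1, e2]
  have step : G p - G p' ≤ m * (G p - G q) := by
    have hl2 : l = 1 - m := by linarith
    rw [hl2] at hcon
    linarith [hcon]
  have hmR : m * R ≤ d := by
    have h1 : m * (R + d) = d := by rw [hm']; field_simp
    nlinarith [mul_nonneg hm hd0.le]
  have hfin : m * (G p - G q) ≤ 4 * (a + b) * R * d := by
    have h1 : m * (G p - G q) ≤ m * (4 * a * R + 4 * b * R ^ 2) :=
      mul_le_mul_of_nonneg_left hbound hm
    have t1 : 4 * a * (m * R) ≤ 4 * a * d :=
      mul_le_mul_of_nonneg_left hmR (by positivity)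
    have t2 : m * R * R ≤ d * R := mul_le_mul_of_nonneg_right hmR hR0.le
    have t3 : 4 * b * (m * R * R) ≤ 4 * b * (d * R) :=
      mul_le_mul_of_nonneg_left t2 (by positivity)
    have t4 : d ≤ R * d := le_mul_of_one_le_left hd0.le hR1
    have t5 : 4 * a * d ≤ 4 * a * (R * d) :=
      mul_le_mul_of_nonneg_left t4 (by positivity)
    linarith [h1, t1, t3, t5]
  linarith

/-- A concave function `G : Y → ℝ` on a real Hilbert space satisfying
`-a(1+|p|) - b|p|² ≤ G p ≤ a(1+|p|)` is locally Lipschitz with the quantitative estimate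
`|G p - G p'| ≤ C (1 + ‖p‖ + ‖p'‖) ‖p - p'‖`, where `C` depends only on `a` and `b`. -/
theorem statement6 {Y : Type*} [NormedAddCommGroup Y] [InnerProductSpace ℝ Y] [CompleteSpace Y]
    (a b : ℝ) (ha : 0 ≤ a) (hb : 0 ≤ b) :
    ∃ C : ℝ, 0 ≤ C ∧ ∀ G : Y → ℝ, ConcaveOn ℝ Set.univ G →
      (∀ p : Y, -a * (1 + ‖p‖) - b * ‖p‖ ^ 2 ≤ G p ∧ G p ≤ a * (1 + ‖p‖)) →
      ∀ p p' : Y, |G p - G p'| ≤ C * (1 + ‖p‖ + ‖p'‖) * ‖p - p'‖ := by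
  refine ⟨4 * (a + b), by positivity, fun G hG hbd p p' => ?_⟩
  rw [abs_sub_le_iff]
  constructor
  · exact statement6_key a b ha hb G hG hbd p p'
  · have h := statement6_key a b ha hb G hG hbd p' p
    rw [norm_sub_rev] at h
    calc G p' - G p ≤ 4 * (a + b) * (1 + ‖p'‖ + ‖p‖) * ‖p - p'‖ := h
      _ = 4 * (a + b) * (1 + ‖p‖ + ‖p'‖) * ‖p - p'‖ := by ring
end

section
/- Assume (Af), (Al), and additionally that for every μ ∈ 𝒫₂(H) the maps (x,q) ↦ f(x,μ,q) and (x,q) ↦ l(x,μ,q) are Borel measurable on H × Λ̃. Then for all Borel measurable X, P : (0,1) → H with ∫_0^1 |X(ω)|² dω < ∞ and ∫_0^1 |P(ω)|² dω < ∞, one has ∫_0^1 𝓗(X(ω), X_#𝓛¹, P(ω)) dω = inf_Q ∫_0^1 ( ⟨f(X(ω), X_#𝓛¹, Q(ω)), P(ω)⟩ + l(X(ω), X_#𝓛¹, Q(ω)) ) dω, where the infimum is taken over all Borel measurable Q : (0,1) → Λ with Q(ω) ∈ Λ̃ for almost every ω and ∫_0^1 |Q(ω)|²_Λ dω < ∞;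 moreover all the integrals appearing are well-defined and finite. -/
open MeasureTheory
open scoped RealInnerProductSpace ENNReal


set_option maxHeartbeats 2000000

section AbstractAux

lemma integrable_sq_of_lintegral {α β : Type*} [MeasurableSpace α] [NormedAddCommGroup β]
    (ν : Measure α) (Y : α → β) (hYm : AEMeasurable (fun ω => ‖Y ω‖) ν)
    (h : (∫⁻ ω, (‖Y ω‖₊ : ℝ≥0∞) ^ 2 ∂ν) < ⊤) :
    Integrable (fun ω => ‖Y ω‖ ^ 2) ν := by
  refine ⟨((hYm.pow_const 2).aestronglyMeasurable), ?_⟩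
  have hcong : ∀ ω, ((‖(‖Y ω‖ ^ 2 : ℝ)‖₊ : ℝ≥0∞)) = (‖Y ω‖₊ : ℝ≥0∞) ^ 2 := by
    intro ω
    rw [nnnorm_pow, nnnorm_norm, ENNReal.coe_pow]
  simpa only [HasFiniteIntegral, enorm_eq_nnnorm, hcong] using h

end AbstractAux

set_option maxHeartbeats 2000000

section Abstract

variable {α : Type*} [MeasurableSpace α]
variable {E : Type*} [NormedAddCommGroup E] [MeasurableSpace E] [BorelSpace E]
  [SecondCountableTopology E]
variable {Λ : Type*} [NormedAddCommGroup Λ] [MeasurableSpace Λ] [BorelSpace Λ]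

theorem abstract_main (ν : Measure α) [IsProbabilityMeasure ν]
    (Λt : Set Λ) (q₀ : Λ) (hq₀ : q₀ ∈ Λt)
    (G : E → Λ → ℝ)
    (hGm : Measurable fun y : E × Λt => G y.1 (y.2 : Λ))
    (hGc : ∀ q ∈ Λt, Continuous fun z : E => G z q)
    (ψ : E → ℝ) (hψ0 : ∀ z, 0 ≤ ψ z)
    (hψb : ∀ R : ℝ, ∃ b : ℝ, ∀ z : E, ‖z‖ ≤ R → ψ z ≤ b)
    (A : ℝ) (hA : 0 ≤ A) (c : ℝ) (hc : 0 < c)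
    (habs : ∀ z : E, ∀ q ∈ Λt, |G z q| ≤ A * ψ z + A * ‖q‖ ^ 2)
    (hlo : ∀ z : E, ∀ q ∈ Λt, -(A * ψ z) + c * ‖q‖ ^ 2 ≤ G z q)
    (hLip : ∀ R : ℝ, ∃ CR : ℝ, 0 ≤ CR ∧ ∀ z z' : E, ∀ q ∈ Λt,
      ‖z‖ ≤ R → ‖z'‖ ≤ R → ‖q‖ ≤ R → |G z q - G z' q| ≤ CR * ‖z - z'‖)
    (Φ : α → E) (hΦm : Measurable Φ)
    (hψΦ : Integrable (fun ω => ψ (Φ ω)) ν) :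
    Integrable (fun ω => sInf ((fun q => G (Φ ω) q) '' Λt)) ν ∧
    (∀ Q : α → Λ, Measurable Q → (∀ᵐ ω ∂ν, Q ω ∈ Λt) →
      (∫⁻ ω, (‖Q ω‖₊ : ℝ≥0∞) ^ 2 ∂ν) < ⊤ →
      Integrable (fun ω => G (Φ ω) (Q ω)) ν) ∧
    (∫ ω, sInf ((fun q => G (Φ ω) q) '' Λt) ∂ν) =
      sInf {v : ℝ | ∃ Q : α → Λ, Measurable Q ∧ (∀ᵐ ω ∂ν, Q ω ∈ Λt) ∧
        (∫⁻ ω, (‖Q ω‖₊ : ℝ≥0∞) ^ 2 ∂ν) < ⊤ ∧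
        v = ∫ ω, G (Φ ω) (Q ω) ∂ν} := by
  classical
  set Hm : E → ℝ := fun z => sInf ((fun q => G z q) '' Λt) with hHmdef
  -- basic pointwise facts about the infimum
  have hne : ∀ z : E, ((fun q => G z q) '' Λt).Nonempty := fun z => ⟨G z q₀, q₀, hq₀, rfl⟩
  have hlb : ∀ z : E, ∀ y ∈ (fun q => G z q) '' Λt, -(A * ψ z) ≤ y := by
    rintro z y ⟨q, hq, rfl⟩
    have h1 := hlo z q hq
    nlinarith [mul_nonneg hc.le (sq_nonneg ‖q‖)]
  have hbdd : ∀ z : E, BddBelow ((fun q => G z q) '' Λt) := fun z => ⟨_, hlb z⟩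
  have hHm_le : ∀ z : E, ∀ q ∈ Λt, Hm z ≤ G z q := fun z q hq => csInf_le (hbdd z) ⟨q, hq, rfl⟩
  have hHm_lb : ∀ z : E, -(A * ψ z) ≤ Hm z := fun z => le_csInf (hne z) (hlb z)
  have hKH : (0:ℝ) ≤ A * ‖q₀‖ ^ 2 := mul_nonneg hA (sq_nonneg _)
  have hHm_ub : ∀ z : E, Hm z ≤ A * ψ z + A * ‖q₀‖ ^ 2 :=
    fun z => (hHm_le z q₀ hq₀).trans ((le_abs_self _).trans (habs z q₀ hq₀))
  have hHm_abs : ∀ z : E, |Hm z| ≤ A * ψ z + A * ‖q₀‖ ^ 2 := by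
    intro z
    refine abs_le.2 ⟨?_, hHm_ub z⟩
    have := hHm_lb z; nlinarith
  -- measurability of the infimum
  have hHmm : Measurable Hm := by
    apply measurable_of_Iio
    intro t
    have heq : Hm ⁻¹' Set.Iio t = ⋃ q : Λt, (fun z : E => G z (q : Λ)) ⁻¹' Set.Iio t := by
      ext z
      simp only [Set.mem_preimage, Set.mem_Iio, Set.mem_iUnion]
      constructor
      · intro h
        obtain ⟨y, ⟨q, hq, rfl⟩, hlt⟩ := exists_lt_of_csInf_lt (hne z) h
        exact ⟨⟨q, hq⟩, hlt⟩
      · rintro ⟨⟨q, hq⟩, h⟩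
        exact lt_of_le_of_lt (hHm_le z q hq) h
    rw [heq]
    exact (isOpen_iUnion fun q : Λt => (isOpen_Iio).preimage (hGc q.1 q.2)).measurableSet
  have hψΦm' : Integrable (fun ω => A * ψ (Φ ω) + A * ‖q₀‖ ^ 2) ν :=
    (hψΦ.const_mul A).add (integrable_const _)
  have hHmΦint : Integrable (fun ω => Hm (Φ ω)) ν := by
    refine hψΦm'.mono' ((hHmm.comp hΦm).aestronglyMeasurable) ?_
    exact Filter.Eventually.of_forall fun ω => by
      rw [Real.norm_eq_abs]; exact hHm_abs (Φ ω)
  -- part 2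
  have part2 : ∀ Q : α → Λ, Measurable Q → (∀ᵐ ω ∂ν, Q ω ∈ Λt) →
      (∫⁻ ω, (‖Q ω‖₊ : ℝ≥0∞) ^ 2 ∂ν) < ⊤ →
      Integrable (fun ω => G (Φ ω) (Q ω)) ν := by
    intro Q hQm hQae hQ2
    have hQsq : Integrable (fun ω => ‖Q ω‖ ^ 2) ν :=
      integrable_sq_of_lintegral ν Q hQm.norm.aemeasurable hQ2
    set N := MeasureTheory.toMeasurable ν {ω | Q ω ∉ Λt} with hNdef
    have hNmeas : MeasurableSet N := measurableSet_toMeasurable ν _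
    have hNnull : ν N = 0 := by
      rw [hNdef, measure_toMeasurable]
      exact ae_iff.1 hQae
    set Q' : α → Λ := fun ω => if ω ∈ N then q₀ else Q ω with hQ'def
    have hQ'm : Measurable Q' := Measurable.ite hNmeas measurable_const hQm
    have hQ'Λ : ∀ ω, Q' ω ∈ Λt := by
      intro ω; by_cases h : ω ∈ N
      · simp only [hQ'def, if_pos h]; exact hq₀
      · simp only [hQ'def, if_neg h]
        by_contra hc'
        exact h (subset_toMeasurable ν _ hc')
    have hQQ' : ∀ᵐ ω ∂ν, Q ω = Q' ω := by
      refine ae_iff.2 (measure_mono_null ?_ hNnull)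
      intro ω hω
      simp only [Set.mem_setOf_eq] at hω
      by_contra hN
      exact hω (by simp only [hQ'def, if_neg hN])
    have hGQ'm : Measurable fun ω => G (Φ ω) (Q' ω) := by
      have hmk : Measurable fun ω => ((Φ ω, ⟨Q' ω, hQ'Λ ω⟩) : E × Λt) :=
        hΦm.prodMk (hQ'm.subtype_mk)
      exact hGm.comp hmk
    have hQ'sq : Integrable (fun ω => ‖Q' ω‖ ^ 2) ν := by
      refine hQsq.congr ?_
      filter_upwards [hQQ'] with ω h; rw [h]
    have hint' : Integrable (fun ω => G (Φ ω) (Q' ω)) ν := by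
      refine ((hψΦ.const_mul A).add (hQ'sq.const_mul A)).mono' hGQ'm.aestronglyMeasurable ?_
      refine Filter.Eventually.of_forall fun ω => ?_
      rw [Real.norm_eq_abs]
      exact habs _ _ (hQ'Λ ω)
    refine hint'.congr ?_
    filter_upwards [hQQ'] with ω h; rw [h]
  -- the admissible-value set
  set Sv := {v : ℝ | ∃ Q : α → Λ, Measurable Q ∧ (∀ᵐ ω ∂ν, Q ω ∈ Λt) ∧
      (∫⁻ ω, (‖Q ω‖₊ : ℝ≥0∞) ^ 2 ∂ν) < ⊤ ∧
      v = ∫ ω, G (Φ ω) (Q ω) ∂ν} with hSvdef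
  have hq₀2 : (∫⁻ (_ : α), ((‖q₀‖₊ : ℝ≥0∞)) ^ 2 ∂ν) < ⊤ := by
    rw [lintegral_const, measure_univ, mul_one]
    exact ENNReal.pow_lt_top ENNReal.coe_lt_top
  have hSvne : Sv.Nonempty :=
    ⟨_, fun _ => q₀, measurable_const, Filter.Eventually.of_forall fun _ => hq₀, hq₀2, rfl⟩
  have hlbS : ∀ v ∈ Sv, (∫ ω, Hm (Φ ω) ∂ν) ≤ v := by
    rintro v ⟨Q, hQm, hQae, hQ2, rfl⟩
    refine integral_mono_ae hHmΦint (part2 Q hQm hQae hQ2) ?_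
    filter_upwards [hQae] with ω hω
    exact hHm_le (Φ ω) (Q ω) hω
  -- key approximation
  have key : ∀ ε : ℝ, 0 < ε → ∃ v ∈ Sv, v ≤ (∫ ω, Hm (Φ ω) ∂ν) + ε := by
    intro ε hε
    -- tail estimate
    set g : α → ℝ := fun ω => 2 * A * ψ (Φ ω) + 2 * (A * ‖q₀‖ ^ 2) with hgdef
    have hgint : Integrable g ν := ((hψΦ.const_mul (2 * A)).add (integrable_const _))
    have hg0 : ∀ ω, 0 ≤ g ω := fun ω =>
      add_nonneg (mul_nonneg (by linarith) (hψ0 _)) (by linarith)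
    have hBad : ∀ n : ℕ, MeasurableSet {ω | ¬ ‖Φ ω‖ ≤ (n : ℝ)} :=
      fun n => (measurableSet_le (hΦm.norm) measurable_const).compl
    have htail : Filter.Tendsto
        (fun n : ℕ => ∫ ω, Set.indicator {ω | ¬ ‖Φ ω‖ ≤ (n : ℝ)} g ω ∂ν)
        Filter.atTop (nhds 0) := by
      have h0 : (0 : ℝ) = ∫ (_ : α), (0 : ℝ) ∂ν := by simp
      rw [h0]
      refine tendsto_integral_of_dominated_convergence g
        (fun n => (hgint.aestronglyMeasurable.indicator (hBad n))) hgint ?_ ?_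
      · intro n
        refine Filter.Eventually.of_forall fun ω => ?_
        by_cases h : ω ∈ {ω | ¬ ‖Φ ω‖ ≤ (n : ℝ)}
        · rw [Set.indicator_of_mem h, Real.norm_of_nonneg (hg0 ω)]
        · rw [Set.indicator_of_notMem h, norm_zero]; exact hg0 ω
      · refine Filter.Eventually.of_forall fun ω => ?_
        have hev : ∀ᶠ n : ℕ in Filter.atTop,
            Set.indicator {ω | ¬ ‖Φ ω‖ ≤ (n : ℝ)} g ω = 0 := by
          rw [Filter.eventually_atTop]
          refine ⟨⌈‖Φ ω‖⌉₊, fun n hn => ?_⟩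
          refine Set.indicator_of_notMem ?_ g
          simp only [Set.mem_setOf_eq, not_not]
          exact (Nat.le_ceil _).trans (by exact_mod_cast hn)
        exact Filter.Tendsto.congr' (hev.mono fun n h => h.symm) tendsto_const_nhds
    obtain ⟨R, hR⟩ := (Metric.tendsto_atTop.1 htail (ε / 2) (by linarith))
    have hRtail : (∫ ω, Set.indicator {ω | ¬ ‖Φ ω‖ ≤ (R : ℝ)} g ω ∂ν) < ε / 2 := by
      have := hR R le_rfl
      rw [Real.dist_eq, sub_zero] at this
      exact (le_abs_self _).trans_lt this
    -- the bound ρ on near-minimizers over the good region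
    obtain ⟨b, hb⟩ := hψb (R : ℝ)
    have hb0 : 0 ≤ b := (hψ0 0).trans (hb 0 (by simp))
    set Mρ : ℝ := 2 * A * b + A * ‖q₀‖ ^ 2 + 1 with hMρdef
    have hMρ0 : 0 < Mρ := by nlinarith
    set ρ : ℝ := Real.sqrt (Mρ / c) with hρdef
    have hρ0 : 0 ≤ ρ := Real.sqrt_nonneg _
    have hnear : ∀ z : E, ‖z‖ ≤ (R : ℝ) → ∀ q ∈ Λt, G z q ≤ Hm z + 1 → ‖q‖ ≤ ρ := by
      intro z hz q hq hGq
      have h1 := hlo z q hq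
      have h2 := hHm_ub z
      have h3 := hb z hz
      have h4 : c * ‖q‖ ^ 2 ≤ Mρ := by nlinarith [hψ0 z]
      have h5 : ‖q‖ ^ 2 ≤ Mρ / c := (le_div_iff₀ hc).2 (by linarith [mul_comm c (‖q‖ ^ 2)])
      calc ‖q‖ = Real.sqrt (‖q‖ ^ 2) := (Real.sqrt_sq (norm_nonneg q)).symm
        _ ≤ ρ := Real.sqrt_le_sqrt h5
    set R' : ℝ := max (R : ℝ) (max ρ ‖q₀‖) with hR'def
    obtain ⟨CR, hCR0, hCR⟩ := hLip R'
    set ε' : ℝ := min (ε / 8) 1 with hε'def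
    have hε'0 : 0 < ε' := lt_min (by linarith) one_pos
    have hε'1 : ε' ≤ 1 := min_le_right _ _
    have hε'8 : ε' ≤ ε / 8 := min_le_left _ _
    set δ : ℝ := ε / (16 * (CR + 1)) with hδdef
    have hδ0 : 0 < δ := by
      apply div_pos hε; nlinarith
    -- countable partition of E via a dense sequence
    have hEne : Nonempty E := ⟨0⟩
    set u : ℕ → E := TopologicalSpace.denseSeq E with hudef
    have hu : DenseRange u := TopologicalSpace.denseRange_denseSeq E
    have hcov : ∀ ω, ∃ i, dist (Φ ω) (u i) < δ := fun ω => hu.exists_dist_lt (Φ ω) hδ0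
    set ι : α → ℕ := fun ω => Nat.find (hcov ω) with hιdef
    have hιspec : ∀ ω, dist (Φ ω) (u (ι ω)) < δ := fun ω => Nat.find_spec (hcov ω)
    have hιm : Measurable ι := by
      refine measurable_find _ fun k => ?_
      exact measurableSet_lt (hΦm.dist measurable_const) measurable_const
    -- choice of a good control on each cell
    have hcell : ∀ i : ℕ, ∃ q : Λ, q ∈ Λt ∧ ‖q‖ ≤ max ρ ‖q₀‖ ∧
        ∀ ω, ι ω = i → ‖Φ ω‖ ≤ (R : ℝ) →
          G (Φ ω) q ≤ Hm (Φ ω) + (2 * ε' + 4 * CR * δ) := by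
      intro i
      by_cases hi : ∃ ω₀, ι ω₀ = i ∧ ‖Φ ω₀‖ ≤ (R : ℝ)
      · obtain ⟨ω₀, hι₀, hR₀⟩ := hi
        obtain ⟨y, ⟨qi, hqi, rfl⟩, hy⟩ :=
          exists_lt_of_csInf_lt (hne (Φ ω₀)) (lt_add_of_pos_right (Hm (Φ ω₀)) hε'0)
        have hqiρ : ‖qi‖ ≤ ρ :=
          hnear (Φ ω₀) hR₀ qi hqi (hy.le.trans (by linarith))
        refine ⟨qi, hqi, hqiρ.trans (le_max_left _ _), ?_⟩
        intro ω hιω hRω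
        have hdz : ‖Φ ω - Φ ω₀‖ ≤ 2 * δ := by
          have d1 := hιspec ω; rw [hιω] at d1
          have d2 := hιspec ω₀; rw [hι₀] at d2
          have d3 := dist_triangle (Φ ω) (u i) (Φ ω₀)
          rw [← dist_eq_norm]
          have d4 : dist (u i) (Φ ω₀) = dist (Φ ω₀) (u i) := dist_comm _ _
          linarith
        obtain ⟨y', ⟨q', hq', rfl⟩, hy'⟩ :=
          exists_lt_of_csInf_lt (hne (Φ ω)) (lt_add_of_pos_right (Hm (Φ ω)) hε'0)
        have hq'ρ : ‖q'‖ ≤ ρ :=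
          hnear (Φ ω) hRω q' hq' (hy'.le.trans (by linarith))
        have hzR' : ‖Φ ω‖ ≤ R' := hRω.trans (le_max_left _ _)
        have hz₀R' : ‖Φ ω₀‖ ≤ R' := hR₀.trans (le_max_left _ _)
        have hqiR' : ‖qi‖ ≤ R' := (hqiρ.trans (le_max_left ρ ‖q₀‖)).trans (le_max_right _ _)
        have hq'R' : ‖q'‖ ≤ R' := (hq'ρ.trans (le_max_left ρ ‖q₀‖)).trans (le_max_right _ _)
        have lip1 := abs_le.1 (hCR (Φ ω) (Φ ω₀) qi hqi hzR' hz₀R' hqiR')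
        have lip2 := abs_le.1 (hCR (Φ ω₀) (Φ ω) q' hq' hz₀R' hzR' hq'R')
        have hzz : ‖Φ ω₀ - Φ ω‖ = ‖Φ ω - Φ ω₀‖ := norm_sub_rev _ _
        have hHmz₀ : Hm (Φ ω₀) ≤ G (Φ ω₀) q' := hHm_le (Φ ω₀) q' hq'
        have e1 : CR * ‖Φ ω - Φ ω₀‖ ≤ CR * (2 * δ) := mul_le_mul_of_nonneg_left hdz hCR0
        have e2 : CR * ‖Φ ω₀ - Φ ω‖ ≤ CR * (2 * δ) := by rw [hzz]; exact e1
        linarith [lip1.2, lip2.2]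
      · exact ⟨q₀, hq₀, le_max_right _ _, fun ω hιω hRω => absurd ⟨ω, hιω, hRω⟩ hi⟩
    choose cc hccΛ hccρ hcc using hcell
    set GoodS : Set α := {ω | ‖Φ ω‖ ≤ (R : ℝ)} with hGoodSdef
    have hGoodm : MeasurableSet GoodS := measurableSet_le hΦm.norm measurable_const
    set Q : α → Λ := fun ω => if ω ∈ GoodS then cc (ι ω) else q₀ with hQdef
    have hQm : Measurable Q :=
      Measurable.ite hGoodm ((measurable_from_top (f := cc)).comp hιm) measurable_const
    have hQΛ : ∀ ω, Q ω ∈ Λt := by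
      intro ω
      by_cases h : ω ∈ GoodS
      · simp only [hQdef, if_pos h]; exact hccΛ _
      · simp only [hQdef, if_neg h]; exact hq₀
    set κ : ℝ := max (max ρ ‖q₀‖) ‖q₀‖ with hκdef
    have hQbd : ∀ ω, ‖Q ω‖ ≤ κ := by
      intro ω
      by_cases h : ω ∈ GoodS
      · simp only [hQdef, if_pos h]; exact (hccρ (ι ω)).trans (le_max_left _ _)
      · simp only [hQdef, if_neg h]; exact le_max_right _ _
    have hQ2 : (∫⁻ ω, (‖Q ω‖₊ : ℝ≥0∞) ^ 2 ∂ν) < ⊤ := by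
      calc (∫⁻ ω, (‖Q ω‖₊ : ℝ≥0∞) ^ 2 ∂ν) ≤ ∫⁻ _, (ENNReal.ofReal κ) ^ 2 ∂ν := by
            refine lintegral_mono fun ω => ?_
            have hle : (‖Q ω‖₊ : ℝ≥0∞) ≤ ENNReal.ofReal κ := by
              rw [← enorm_eq_nnnorm, ← ofReal_norm]
              exact ENNReal.ofReal_le_ofReal (hQbd ω)
            exact pow_le_pow_left' hle 2
        _ < ⊤ := by
            rw [lintegral_const, measure_univ, mul_one]
            exact ENNReal.pow_lt_top ENNReal.ofReal_lt_top
    have hQae : ∀ᵐ ω ∂ν, Q ω ∈ Λt := Filter.Eventually.of_forall hQΛ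
    have hQint : Integrable (fun ω => G (Φ ω) (Q ω)) ν := part2 Q hQm hQae hQ2
    -- pointwise comparison
    set χ : α → ℝ := fun ω =>
      Set.indicator GoodS (fun _ => 2 * ε' + 4 * CR * δ) ω + Set.indicator GoodSᶜ g ω with hχdef
    have hpt : ∀ ω, G (Φ ω) (Q ω) ≤ Hm (Φ ω) + χ ω := by
      intro ω
      by_cases h : ω ∈ GoodS
      · have hQω : Q ω = cc (ι ω) := if_pos h
        have hmain := hcc (ι ω) ω rfl h
        have hind : χ ω = 2 * ε' + 4 * CR * δ := by
          simp only [hχdef, Set.indicator_of_mem h,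
            Set.indicator_of_notMem (show ω ∉ GoodSᶜ from fun hh => hh h), add_zero]
        rw [hQω, hind]; exact hmain
      · have hQω : Q ω = q₀ := if_neg h
        have h1 : G (Φ ω) q₀ ≤ A * ψ (Φ ω) + A * ‖q₀‖ ^ 2 :=
          (le_abs_self _).trans (habs _ _ hq₀)
        have h2 := hHm_lb (Φ ω)
        have hind : χ ω = g ω := by
          simp only [hχdef, Set.indicator_of_notMem h,
            Set.indicator_of_mem (Set.mem_compl h), zero_add]
        rw [hQω, hind, hgdef]
        simp only
        nlinarith [hψ0 (Φ ω)]
    have hχ1int : Integrable (Set.indicator GoodS fun _ => 2 * ε' + 4 * CR * δ) ν :=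
      (integrable_const _).indicator hGoodm
    have hχ2int : Integrable (Set.indicator GoodSᶜ g) ν := hgint.indicator hGoodm.compl
    have hχint : Integrable χ ν := hχ1int.add hχ2int
    have hsum : (∫ ω, G (Φ ω) (Q ω) ∂ν) ≤ ∫ ω, (Hm (Φ ω) + χ ω) ∂ν :=
      integral_mono hQint (hHmΦint.add hχint) hpt
    have hχval : (∫ ω, χ ω ∂ν) ≤ (2 * ε' + 4 * CR * δ) + ε / 2 := by
      have hint_eq : (∫ ω, χ ω ∂ν) =
          (∫ ω, Set.indicator GoodS (fun _ => 2 * ε' + 4 * CR * δ) ω ∂ν) +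
          ∫ ω, Set.indicator GoodSᶜ g ω ∂ν := integral_add hχ1int hχ2int
      have h1 : (∫ ω, Set.indicator GoodS (fun _ => 2 * ε' + 4 * CR * δ) ω ∂ν) ≤
          2 * ε' + 4 * CR * δ := by
        rw [integral_indicator hGoodm, setIntegral_const, smul_eq_mul]
        have ht1 : (ν GoodS).toReal ≤ 1 := by
          simpa using ENNReal.toReal_mono ENNReal.one_ne_top prob_le_one
        have hc0 : 0 ≤ 2 * ε' + 4 * CR * δ := by positivity
        rw [measureReal_def]
        nlinarith
      have h2 : (∫ ω, Set.indicator GoodSᶜ g ω ∂ν) ≤ ε / 2 := by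
        have : GoodSᶜ = {ω | ¬ ‖Φ ω‖ ≤ (R : ℝ)} := by
          ext ω; simp [hGoodSdef]
        rw [this]
        exact hRtail.le
      rw [hint_eq]; linarith
    have hfin : (∫ ω, G (Φ ω) (Q ω) ∂ν) ≤ (∫ ω, Hm (Φ ω) ∂ν) + ε := by
      rw [integral_add hHmΦint hχint] at hsum
      have h2ε' : 2 * ε' ≤ ε / 4 := by linarith
      have h4 : 4 * CR * δ ≤ ε / 4 := by
        rw [hδdef]
        rw [← mul_div_assoc, div_le_div_iff₀ (by nlinarith) (by norm_num)]
        nlinarith [mul_nonneg hCR0 hε.le]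
      linarith
    exact ⟨_, ⟨Q, hQm, hQae, hQ2, rfl⟩, hfin⟩
  refine ⟨hHmΦint, part2, ?_⟩
  refine le_antisymm (le_csInf hSvne hlbS) ?_
  by_contra hcon
  push_neg at hcon
  obtain ⟨v, hv, hvle⟩ := key ((sInf Sv - ∫ ω, Hm (Φ ω) ∂ν) / 2) (by linarith)
  have h2 := csInf_le (⟨_, hlbS⟩ : BddBelow Sv) hv
  linarith

end Abstract

section

variable {H : Type*} [NormedAddCommGroup H] [InnerProductSpace ℝ H] [CompleteSpace H]
  [SecondCountableTopology H] [MeasurableSpace H] [BorelSpace H]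
variable {Λ : Type*} [NormedAddCommGroup Λ] [InnerProductSpace ℝ Λ] [CompleteSpace Λ]
  [SecondCountableTopology Λ] [MeasurableSpace Λ] [BorelSpace Λ]

lemma dr_self_zero (r : ℝ) (hr1 : 1 ≤ r) (μ : Measure H) [IsProbabilityMeasure μ] :
    dr r μ μ = 0 := by
  have hrpos : (0:ℝ) < r := lt_of_lt_of_le one_pos hr1
  have hdiag : Measurable fun x : H => (x, x) := measurable_id.prodMk measurable_id
  have h0mem : (0:ℝ) ∈ { c : ℝ | ∃ γ : Measure (H × H), IsProbabilityMeasure γ ∧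
      γ.map Prod.fst = μ ∧ γ.map Prod.snd = μ ∧
      c = (∫ p, ‖p.1 - p.2‖ ^ r ∂γ) ^ (1 / r) } := by
    refine ⟨μ.map (fun x => (x, x)), Measure.isProbabilityMeasure_map hdiag.aemeasurable, ?_, ?_, ?_⟩
    · rw [Measure.map_map measurable_fst hdiag]
      simp only [Function.comp_def]
      exact Measure.map_id
    · rw [Measure.map_map measurable_snd hdiag]
      simp only [Function.comp_def]
      exact Measure.map_id
    · have hcont : Continuous fun p : H × H => ‖p.1 - p.2‖ ^ r :=
        (continuous_fst.sub continuous_snd).norm.rpow_const fun p => Or.inr hrpos.le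
      rw [integral_map hdiag.aemeasurable hcont.aestronglyMeasurable]
      simp only [sub_self, norm_zero, Real.zero_rpow hrpos.ne']
      rw [integral_zero, Real.zero_rpow (one_div_ne_zero hrpos.ne')]
  have hlbS : ∀ c' ∈ { c : ℝ | ∃ γ : Measure (H × H), IsProbabilityMeasure γ ∧
      γ.map Prod.fst = μ ∧ γ.map Prod.snd = μ ∧
      c = (∫ p, ‖p.1 - p.2‖ ^ r ∂γ) ^ (1 / r) }, (0:ℝ) ≤ c' := by
    rintro c' ⟨γ, _, _, _, rfl⟩
    exact Real.rpow_nonneg (integral_nonneg fun p => Real.rpow_nonneg (norm_nonneg _) r) _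
  exact le_antisymm (csInf_le ⟨0, hlbS⟩ h0mem) (le_csInf ⟨0, h0mem⟩ hlbS)

lemma drB_self_zero (B : H →L[ℝ] H) (r : ℝ) (hr1 : 1 ≤ r) (μ : Measure H)
    [IsProbabilityMeasure μ] : drB B r μ μ = 0 := by
  have hrpos : (0:ℝ) < r := lt_of_lt_of_le one_pos hr1
  have hdiag : Measurable fun x : H => (x, x) := measurable_id.prodMk measurable_id
  have hnrmc : Continuous fun v : H => nrmB B v := by
    have : Continuous fun v : H => ⟪B v, v⟫ := Continuous.inner B.continuous continuous_id
    exact Real.continuous_sqrt.comp this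
  have hnrm0 : ∀ v : H, 0 ≤ nrmB B v := fun v => Real.sqrt_nonneg _
  have h0mem : (0:ℝ) ∈ { c : ℝ | ∃ γ : Measure (H × H), IsProbabilityMeasure γ ∧
      γ.map Prod.fst = μ ∧ γ.map Prod.snd = μ ∧
      c = (∫ p, nrmB B (p.1 - p.2) ^ r ∂γ) ^ (1 / r) } := by
    refine ⟨μ.map (fun x => (x, x)), Measure.isProbabilityMeasure_map hdiag.aemeasurable, ?_, ?_, ?_⟩
    · rw [Measure.map_map measurable_fst hdiag]
      simp only [Function.comp_def]
      exact Measure.map_id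
    · rw [Measure.map_map measurable_snd hdiag]
      simp only [Function.comp_def]
      exact Measure.map_id
    · have hcont : Continuous fun p : H × H => nrmB B (p.1 - p.2) ^ r :=
        (hnrmc.comp (continuous_fst.sub continuous_snd)).rpow_const fun p => Or.inr hrpos.le
      rw [integral_map hdiag.aemeasurable hcont.aestronglyMeasurable]
      have hz : ∀ x : H, nrmB B (x - x) ^ r = 0 := by
        intro x
        have : nrmB B (x - x) = 0 := by
          simp [nrmB, sub_self]
        rw [this, Real.zero_rpow hrpos.ne']
      simp only [hz]
      rw [integral_zero, Real.zero_rpow (one_div_ne_zero hrpos.ne')]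
  have hlbS : ∀ c' ∈ { c : ℝ | ∃ γ : Measure (H × H), IsProbabilityMeasure γ ∧
      γ.map Prod.fst = μ ∧ γ.map Prod.snd = μ ∧
      c = (∫ p, nrmB B (p.1 - p.2) ^ r ∂γ) ^ (1 / r) }, (0:ℝ) ≤ c' := by
    rintro c' ⟨γ, _, _, _, rfl⟩
    exact Real.rpow_nonneg (integral_nonneg fun p => Real.rpow_nonneg (hnrm0 _) r) _
  exact le_antisymm (csInf_le ⟨0, hlbS⟩ h0mem) (le_csInf ⟨0, h0mem⟩ hlbS)

/-- Representation of the lifted Hamiltonian: under (Af), (Al) and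
Borel measurability of `f` and `l` on `H × Λ̃`, for square-integrable Borel
`X, P : (0,1) → H`,
`∫ 𝓗(X(ω), X_#𝓛¹, P(ω)) dω = inf_Q ∫ (⟨f(X(ω),X_#𝓛¹,Q(ω)), P(ω)⟩ + l(X(ω),X_#𝓛¹,Q(ω))) dω`,
the infimum being over admissible square-integrable `Q` with values in `Λ̃`, and all
integrals appearing are well defined and finite. -/
theorem statement7
    (r : ℝ) (hr1 : 1 ≤ r) (hr2 : r < 2)
    (B : H →L[ℝ] H)
    (hBsa : ∀ x y : H, ⟪B x, y⟫ = ⟪x, B y⟫)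
    (hBpos : ∀ x : H, x ≠ 0 → 0 < ⟪B x, x⟫)
    (f₁ : H → Measure H → H) (f₂ : H → Measure H → Λ → H)
    (l₁ : H → Measure H → ℝ) (l₂ : H → Measure H → Λ → ℝ)
    (Λt : Set Λ) (hΛne : Λt.Nonempty) (hΛconv : Convex ℝ Λt)
    -- Assumption (Af)
    (Cf : ℝ) (hCf : 0 ≤ Cf)
    (hf_lip : ∀ (x y : H) (μ β : Measure H) (q : Λ), IsP2 μ → IsP2 β → q ∈ Λt →
      ‖f₁ x μ - f₁ y β‖ + ‖f₂ x μ q - f₂ y β q‖ ≤ Cf * (‖x - y‖ + dr r μ β))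
    (hf₂bd : ∀ (x : H) (μ : Measure H) (q : Λ), IsP2 μ → q ∈ Λt →
      ‖f₂ x μ q‖ ≤ Cf * (1 + ‖q‖))
    -- Assumption (Al)
    (Cl : ℝ) (hCl : 0 ≤ Cl)
    (hl_lip : ∀ (x y : H) (μ β : Measure H) (q : Λ), IsP2 μ → IsP2 β → q ∈ Λt →
      |l₁ x μ - l₁ y β| + |l₂ x μ q - l₂ y β q| ≤ Cl * (nrmB B (x - y) + drB B r μ β))
    (C₁ C₂ C₃ : ℝ) (hC₁ : 0 ≤ C₁) (hC₂ : 0 < C₂) (hC₃ : 0 < C₃)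
    (hl₂bd : ∀ (x : H) (μ : Measure H) (q : Λ), IsP2 μ → q ∈ Λt →
      -C₁ + C₂ * ‖q‖ ^ 2 ≤ l₂ x μ q ∧ l₂ x μ q ≤ C₁ + C₃ * ‖q‖ ^ 2)
    (hfm : ∀ μ : Measure H,
      Measurable (fun z : H × Λt => f₁ z.1 μ + f₂ z.1 μ (z.2 : Λ)))
    (hlm : ∀ μ : Measure H,
      Measurable (fun z : H × Λt => l₁ z.1 μ + l₂ z.1 μ (z.2 : Λ)))
    (X P : ℝ → H) (hXm : Measurable X) (hPm : Measurable P)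
    (hX2 : (∫⁻ ω in Set.Ioo (0:ℝ) 1, (‖X ω‖₊ : ℝ≥0∞) ^ 2) < ⊤)
    (hP2 : (∫⁻ ω in Set.Ioo (0:ℝ) 1, (‖P ω‖₊ : ℝ≥0∞) ^ 2) < ⊤) :
    Integrable
      (fun ω => Ham (fun a ν q => f₁ a ν + f₂ a ν q) (fun a ν q => l₁ a ν + l₂ a ν q) Λt
        (X ω) (Measure.map X (volume.restrict (Set.Ioo (0:ℝ) 1))) (P ω))
      (volume.restrict (Set.Ioo (0:ℝ) 1)) ∧
    (∀ Q : ℝ → Λ, Measurable Q →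
      (∀ᵐ ω ∂(volume.restrict (Set.Ioo (0:ℝ) 1)), Q ω ∈ Λt) →
      (∫⁻ ω in Set.Ioo (0:ℝ) 1, (‖Q ω‖₊ : ℝ≥0∞) ^ 2) < ⊤ →
      Integrable
        (fun ω =>
          ⟪f₁ (X ω) (Measure.map X (volume.restrict (Set.Ioo (0:ℝ) 1))) +
              f₂ (X ω) (Measure.map X (volume.restrict (Set.Ioo (0:ℝ) 1))) (Q ω), P ω⟫ +
            (l₁ (X ω) (Measure.map X (volume.restrict (Set.Ioo (0:ℝ) 1))) +
              l₂ (X ω) (Measure.map X (volume.restrict (Set.Ioo (0:ℝ) 1))) (Q ω)))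
        (volume.restrict (Set.Ioo (0:ℝ) 1))) ∧
    (∫ ω in Set.Ioo (0:ℝ) 1,
        Ham (fun a ν q => f₁ a ν + f₂ a ν q) (fun a ν q => l₁ a ν + l₂ a ν q) Λt
          (X ω) (Measure.map X (volume.restrict (Set.Ioo (0:ℝ) 1))) (P ω))
      = sInf { v : ℝ | ∃ Q : ℝ → Λ, Measurable Q ∧
          (∀ᵐ ω ∂(volume.restrict (Set.Ioo (0:ℝ) 1)), Q ω ∈ Λt) ∧
          (∫⁻ ω in Set.Ioo (0:ℝ) 1, (‖Q ω‖₊ : ℝ≥0∞) ^ 2) < ⊤ ∧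
          v = ∫ ω in Set.Ioo (0:ℝ) 1,
            (⟪f₁ (X ω) (Measure.map X (volume.restrict (Set.Ioo (0:ℝ) 1))) +
                f₂ (X ω) (Measure.map X (volume.restrict (Set.Ioo (0:ℝ) 1))) (Q ω), P ω⟫ +
              (l₁ (X ω) (Measure.map X (volume.restrict (Set.Ioo (0:ℝ) 1))) +
                l₂ (X ω) (Measure.map X (volume.restrict (Set.Ioo (0:ℝ) 1))) (Q ω))) } := by
  classical
  obtain ⟨q₀, hq₀⟩ := hΛne
  set ν : Measure ℝ := volume.restrict (Set.Ioo (0:ℝ) 1) with hνdef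
  have hνprob : IsProbabilityMeasure ν := by
    constructor
    rw [hνdef, Measure.restrict_apply MeasurableSet.univ, Set.univ_inter, Real.volume_Ioo]
    norm_num
  haveI := hνprob
  set μ : Measure H := Measure.map X ν with hμdef
  haveI hμprob : IsProbabilityMeasure μ := Measure.isProbabilityMeasure_map hXm.aemeasurable
  have hμ2 : (∫⁻ x, (‖x‖₊ : ℝ≥0∞) ^ 2 ∂μ) < ⊤ := by
    have hm2 : Measurable fun x : H => (‖x‖₊ : ℝ≥0∞) ^ 2 :=
      measurable_nnnorm.coe_nnreal_ennreal.pow_const 2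
    rw [hμdef, lintegral_map hm2 hXm]
    exact hX2
  have hμP2 : IsP2 μ := ⟨hμprob, hμ2⟩
  have hdr0 : dr r μ μ = 0 := dr_self_zero r hr1 μ
  have hdrB0 : drB B r μ μ = 0 := drB_self_zero B r hr1 μ
  -- Lipschitz / growth estimates at the fixed measure μ
  have F1 : ∀ x y : H, ‖f₁ x μ - f₁ y μ‖ ≤ Cf * ‖x - y‖ := by
    intro x y
    have h := hf_lip x y μ μ q₀ hμP2 hμP2 hq₀
    rw [hdr0, add_zero] at h
    linarith [norm_nonneg (f₂ x μ q₀ - f₂ y μ q₀)]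
  have F2 : ∀ (x y : H) (q : Λ), q ∈ Λt → ‖f₂ x μ q - f₂ y μ q‖ ≤ Cf * ‖x - y‖ := by
    intro x y q hq
    have h := hf_lip x y μ μ q hμP2 hμP2 hq
    rw [hdr0, add_zero] at h
    linarith [norm_nonneg (f₁ x μ - f₁ y μ)]
  have F3 : ∀ (x : H) (q : Λ), q ∈ Λt → ‖f₂ x μ q‖ ≤ Cf * (1 + ‖q‖) :=
    fun x q hq => hf₂bd x μ q hμP2 hq
  have hnrm : ∀ v : H, nrmB B v ≤ Real.sqrt ‖B‖ * ‖v‖ := by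
    intro v
    rw [nrmB]
    have h1 : ⟪B v, v⟫ ≤ ‖B‖ * ‖v‖ ^ 2 := by
      calc ⟪B v, v⟫ ≤ ‖B v‖ * ‖v‖ := real_inner_le_norm _ _
        _ ≤ ‖B‖ * ‖v‖ * ‖v‖ := mul_le_mul_of_nonneg_right (B.le_opNorm v) (norm_nonneg v)
        _ = ‖B‖ * ‖v‖ ^ 2 := by ring
    calc Real.sqrt ⟪B v, v⟫ ≤ Real.sqrt (‖B‖ * ‖v‖ ^ 2) := Real.sqrt_le_sqrt h1
      _ = Real.sqrt ‖B‖ * ‖v‖ := by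
          rw [Real.sqrt_mul (norm_nonneg _), Real.sqrt_sq (norm_nonneg v)]
  set Cb : ℝ := Cl * Real.sqrt ‖B‖ with hCbdef
  have hCb0 : 0 ≤ Cb := mul_nonneg hCl (Real.sqrt_nonneg _)
  have F4 : ∀ x y : H, |l₁ x μ - l₁ y μ| ≤ Cb * ‖x - y‖ := by
    intro x y
    have h := hl_lip x y μ μ q₀ hμP2 hμP2 hq₀
    rw [hdrB0, add_zero] at h
    have h2 := hnrm (x - y)
    have h3 := abs_nonneg (l₂ x μ q₀ - l₂ y μ q₀)
    calc |l₁ x μ - l₁ y μ| ≤ Cl * nrmB B (x - y) := by linarith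
      _ ≤ Cl * (Real.sqrt ‖B‖ * ‖x - y‖) := mul_le_mul_of_nonneg_left h2 hCl
      _ = Cb * ‖x - y‖ := by rw [hCbdef]; ring
  have F5 : ∀ (x y : H) (q : Λ), q ∈ Λt → |l₂ x μ q - l₂ y μ q| ≤ Cb * ‖x - y‖ := by
    intro x y q hq
    have h := hl_lip x y μ μ q hμP2 hμP2 hq
    rw [hdrB0, add_zero] at h
    have h2 := hnrm (x - y)
    have h3 := abs_nonneg (l₁ x μ - l₁ y μ)
    calc |l₂ x μ q - l₂ y μ q| ≤ Cl * nrmB B (x - y) := by linarith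
      _ ≤ Cl * (Real.sqrt ‖B‖ * ‖x - y‖) := mul_le_mul_of_nonneg_left h2 hCl
      _ = Cb * ‖x - y‖ := by rw [hCbdef]; ring
  have F6 : ∀ (x : H) (q : Λ), q ∈ Λt →
      -C₁ + C₂ * ‖q‖ ^ 2 ≤ l₂ x μ q ∧ l₂ x μ q ≤ C₁ + C₃ * ‖q‖ ^ 2 :=
    fun x q hq => hl₂bd x μ q hμP2 hq
  set Kf : ℝ := ‖f₁ 0 μ‖ with hKfdef
  set Kl : ℝ := |l₁ 0 μ| with hKldef
  have hKf0 : 0 ≤ Kf := norm_nonneg _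
  have hKl0 : 0 ≤ Kl := abs_nonneg _
  have hf₁bd : ∀ x : H, ‖f₁ x μ‖ ≤ Kf + Cf * ‖x‖ := by
    intro x
    have h := F1 x 0
    rw [sub_zero] at h
    calc ‖f₁ x μ‖ = ‖f₁ 0 μ + (f₁ x μ - f₁ 0 μ)‖ := by
          congr 1; abel
      _ ≤ ‖f₁ 0 μ‖ + ‖f₁ x μ - f₁ 0 μ‖ := norm_add_le _ _
      _ ≤ Kf + Cf * ‖x‖ := add_le_add le_rfl h
  have hl₁bd : ∀ x : H, |l₁ x μ| ≤ Kl + Cb * ‖x‖ := by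
    intro x
    have h := F4 x 0
    rw [sub_zero] at h
    calc |l₁ x μ| = |l₁ 0 μ + (l₁ x μ - l₁ 0 μ)| := by congr 1; ring
      _ ≤ |l₁ 0 μ| + |l₁ x μ - l₁ 0 μ| := abs_add_le _ _
      _ ≤ Kl + Cb * ‖x‖ := add_le_add le_rfl h
  -- the abstract data
  set G : (H × H) → Λ → ℝ :=
    fun z q => ⟪f₁ z.1 μ + f₂ z.1 μ q, z.2⟫ + (l₁ z.1 μ + l₂ z.1 μ q) with hGdef
  set ψ : (H × H) → ℝ := fun z => 1 + ‖z.1‖ ^ 2 + ‖z.2‖ ^ 2 with hψdef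
  have hFbd : ∀ (x : H) (q : Λ), q ∈ Λt →
      ‖f₁ x μ + f₂ x μ q‖ ≤ Kf + Cf * ‖x‖ + Cf * (1 + ‖q‖) :=
    fun x q hq => (norm_add_le _ _).trans (add_le_add (hf₁bd x) (F3 x q hq))
  have hinner : ∀ v p : H, |⟪v, p⟫| ≤ ‖v‖ * ‖p‖ := fun v p => abs_real_inner_le_norm v p
  have hinner_bd : ∀ (x p : H) (q : Λ), q ∈ Λt →
      |⟪f₁ x μ + f₂ x μ q, p⟫| ≤ (Kf + Cf * ‖x‖ + Cf * (1 + ‖q‖)) * ‖p‖ :=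
    fun x p q hq =>
      (hinner _ p).trans (mul_le_mul_of_nonneg_right (hFbd x q hq) (norm_nonneg p))
  have hl₂abs : ∀ (x : H) (q : Λ), q ∈ Λt → |l₂ x μ q| ≤ C₁ + C₃ * ‖q‖ ^ 2 := by
    intro x q hq
    rw [abs_le]
    constructor
    · nlinarith [(F6 x q hq).1, sq_nonneg ‖q‖, hC₂.le, hC₃.le]
    · exact (F6 x q hq).2
  have hlsum_abs : ∀ (x : H) (q : Λ), q ∈ Λt →
      |l₁ x μ + l₂ x μ q| ≤ (Kl + Cb * ‖x‖) + (C₁ + C₃ * ‖q‖ ^ 2) := fun x q hq =>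
    (abs_add_le _ _).trans (add_le_add (hl₁bd x) (hl₂abs x q hq))
  -- product inequality
  have hqp : ∀ s t : ℝ, 0 ≤ s → 0 ≤ t →
      Cf * s * t ≤ C₂ / 2 * s ^ 2 + Cf ^ 2 / (2 * C₂) * t ^ 2 := by
    intro s t hs ht
    have h2C₂ : (0:ℝ) < 2 * C₂ := by linarith
    have key' : (2 * C₂) * (Cf * s * t) ≤
        (2 * C₂) * (C₂ / 2 * s ^ 2 + Cf ^ 2 / (2 * C₂) * t ^ 2) := by
      have heq : (2 * C₂) * (C₂ / 2 * s ^ 2 + Cf ^ 2 / (2 * C₂) * t ^ 2)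
          = C₂ ^ 2 * s ^ 2 + Cf ^ 2 * t ^ 2 := by
        field_simp
      rw [heq]
      nlinarith [sq_nonneg (C₂ * s - Cf * t)]
    exact le_of_mul_le_mul_left key' h2C₂
  set A : ℝ := Kf + Kl + Cb + C₁ + C₃ + 3 * Cf + Cf ^ 2 / (2 * C₂) + 1 with hAdef
  have hd0 : (0:ℝ) ≤ Cf ^ 2 / (2 * C₂) := by positivity
  have hA0 : 0 ≤ A := by rw [hAdef]; nlinarith
  have habs : ∀ z : H × H, ∀ q ∈ Λt, |G z q| ≤ A * ψ z + A * ‖q‖ ^ 2 := by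
    rintro ⟨x, p⟩ q hq
    have h1 := hinner_bd x p q hq
    have h2 := hlsum_abs x q hq
    have hGval : |G (x, p) q| ≤ (Kf + Cf * ‖x‖ + Cf * (1 + ‖q‖)) * ‖p‖
        + ((Kl + Cb * ‖x‖) + (C₁ + C₃ * ‖q‖ ^ 2)) := by
      simp only [hGdef]
      exact (abs_add_le _ _).trans (add_le_add h1 h2)
    have b1 : ‖p‖ ≤ 1 + ‖p‖ ^ 2 := by nlinarith [sq_nonneg (‖p‖ - 1)]
    have b2 : ‖x‖ ≤ 1 + ‖x‖ ^ 2 := by nlinarith [sq_nonneg (‖x‖ - 1)]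
    have b3 : ‖x‖ * ‖p‖ ≤ ‖x‖ ^ 2 + ‖p‖ ^ 2 := by nlinarith [sq_nonneg (‖x‖ - ‖p‖)]
    have b4 : ‖q‖ * ‖p‖ ≤ ‖q‖ ^ 2 + ‖p‖ ^ 2 := by nlinarith [sq_nonneg (‖q‖ - ‖p‖)]
    have hψval : ψ (x, p) = 1 + ‖x‖ ^ 2 + ‖p‖ ^ 2 := by simp only [hψdef]
    rw [hψval, hAdef]
    nlinarith [hGval, mul_le_mul_of_nonneg_left b1 hKf0, mul_le_mul_of_nonneg_left b3 hCf,
      mul_le_mul_of_nonneg_left b1 hCf, mul_le_mul_of_nonneg_left b4 hCf,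
      mul_le_mul_of_nonneg_left b2 hCb0, sq_nonneg ‖x‖, sq_nonneg ‖p‖, sq_nonneg ‖q‖,
      mul_nonneg hd0 (sq_nonneg ‖x‖), mul_nonneg hd0 (sq_nonneg ‖p‖),
      mul_nonneg hd0 (sq_nonneg ‖q‖), mul_nonneg hC₁ (sq_nonneg ‖x‖),
      mul_nonneg hC₁ (sq_nonneg ‖p‖), mul_nonneg hC₃.le (sq_nonneg ‖x‖),
      mul_nonneg hC₃.le (sq_nonneg ‖p‖), mul_nonneg hKl0 (sq_nonneg ‖x‖),
      mul_nonneg hKl0 (sq_nonneg ‖p‖), mul_nonneg hKf0 (sq_nonneg ‖x‖),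
      mul_nonneg hCb0 (sq_nonneg ‖p‖), mul_nonneg hCf (sq_nonneg ‖q‖),
      mul_nonneg hCf (sq_nonneg ‖x‖), mul_nonneg hCf (sq_nonneg ‖p‖)]
  have hlo : ∀ z : H × H, ∀ q ∈ Λt, -(A * ψ z) + (C₂ / 2) * ‖q‖ ^ 2 ≤ G z q := by
    rintro ⟨x, p⟩ q hq
    have h1 : -((Kf + Cf * ‖x‖ + Cf * (1 + ‖q‖)) * ‖p‖) ≤ ⟪f₁ x μ + f₂ x μ q, p⟫ :=
      (abs_le.1 (hinner_bd x p q hq)).1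
    have h2 : -(Kl + Cb * ‖x‖) ≤ l₁ x μ := by
      have := (abs_le.1 (hl₁bd x)).1; linarith
    have h3 := (F6 x q hq).1
    have hprod := hqp ‖q‖ ‖p‖ (norm_nonneg q) (norm_nonneg p)
    have b1 : ‖p‖ ≤ 1 + ‖p‖ ^ 2 := by nlinarith [sq_nonneg (‖p‖ - 1)]
    have b2 : ‖x‖ ≤ 1 + ‖x‖ ^ 2 := by nlinarith [sq_nonneg (‖x‖ - 1)]
    have b3 : ‖x‖ * ‖p‖ ≤ ‖x‖ ^ 2 + ‖p‖ ^ 2 := by nlinarith [sq_nonneg (‖x‖ - ‖p‖)]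
    have hψval : ψ (x, p) = 1 + ‖x‖ ^ 2 + ‖p‖ ^ 2 := by simp only [hψdef]
    have hGval : G (x, p) q = ⟪f₁ x μ + f₂ x μ q, p⟫ + (l₁ x μ + l₂ x μ q) := by
      simp only [hGdef]
    rw [hψval, hGval, hAdef]
    nlinarith [mul_le_mul_of_nonneg_left b1 hKf0, mul_le_mul_of_nonneg_left b3 hCf,
      mul_le_mul_of_nonneg_left b1 hCf, mul_le_mul_of_nonneg_left b2 hCb0,
      sq_nonneg ‖x‖, sq_nonneg ‖p‖, sq_nonneg ‖q‖,
      mul_nonneg hd0 (sq_nonneg ‖x‖), mul_nonneg hC₁ (sq_nonneg ‖x‖),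
      mul_nonneg hC₁ (sq_nonneg ‖p‖), mul_nonneg hC₃.le (sq_nonneg ‖x‖),
      mul_nonneg hC₃.le (sq_nonneg ‖p‖), mul_nonneg hC₃.le (sq_nonneg ‖q‖),
      mul_nonneg hKl0 (sq_nonneg ‖x‖), mul_nonneg hKl0 (sq_nonneg ‖p‖),
      mul_nonneg hKf0 (sq_nonneg ‖x‖), mul_nonneg hCb0 (sq_nonneg ‖p‖),
      mul_nonneg hCf (sq_nonneg ‖q‖), mul_nonneg hCf (sq_nonneg ‖x‖),
      mul_nonneg hCf (sq_nonneg ‖p‖)]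
  -- continuity in the state variable
  have hlipcontH : ∀ (φ : H → H) (K : ℝ), (∀ x y, ‖φ x - φ y‖ ≤ K * ‖x - y‖) → Continuous φ := by
    intro φ K hφ
    have hL : LipschitzWith (Real.toNNReal K) φ := by
      refine LipschitzWith.of_dist_le_mul fun x y => ?_
      rw [dist_eq_norm, dist_eq_norm]
      exact (hφ x y).trans
        (mul_le_mul_of_nonneg_right (Real.le_coe_toNNReal K) (norm_nonneg _))
    exact hL.continuous
  have hlipcontR : ∀ (φ : H → ℝ) (K : ℝ), (∀ x y, |φ x - φ y| ≤ K * ‖x - y‖) → Continuous φ := by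
    intro φ K hφ
    have hL : LipschitzWith (Real.toNNReal K) φ := by
      refine LipschitzWith.of_dist_le_mul fun x y => ?_
      rw [Real.dist_eq, dist_eq_norm]
      exact (hφ x y).trans
        (mul_le_mul_of_nonneg_right (Real.le_coe_toNNReal K) (norm_nonneg _))
    exact hL.continuous
  have hf₁c : Continuous fun x : H => f₁ x μ := hlipcontH _ Cf F1
  have hl₁c : Continuous fun x : H => l₁ x μ := hlipcontR _ Cb F4
  have hGc : ∀ q ∈ Λt, Continuous fun z : H × H => G z q := by
    intro q hq
    have hf₂c : Continuous fun x : H => f₂ x μ q := hlipcontH _ Cf fun x y => F2 x y q hq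
    have hl₂c : Continuous fun x : H => l₂ x μ q := hlipcontR _ Cb fun x y => F5 x y q hq
    simp only [hGdef]
    exact (Continuous.inner ((hf₁c.comp continuous_fst).add (hf₂c.comp continuous_fst))
      continuous_snd).add ((hl₁c.comp continuous_fst).add (hl₂c.comp continuous_fst))
  -- joint measurability
  have hGm : Measurable fun y : (H × H) × Λt => G y.1 (y.2 : Λ) := by
    have hemb : Measurable fun y : (H × H) × Λt => ((y.1.1, y.2) : H × Λt) :=
      (measurable_fst.fst).prodMk measurable_snd
    have h1 : Measurable fun y : (H × H) × Λt => f₁ y.1.1 μ + f₂ y.1.1 μ (y.2 : Λ) :=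
      (hfm μ).comp hemb
    have h2 : Measurable fun y : (H × H) × Λt => l₁ y.1.1 μ + l₂ y.1.1 μ (y.2 : Λ) :=
      (hlm μ).comp hemb
    have h3 : Measurable fun y : (H × H) × Λt => (y.1.2 : H) := measurable_fst.snd
    simp only [hGdef]
    exact (h1.inner h3).add h2
  -- ψ properties
  have hψ0 : ∀ z : H × H, 0 ≤ ψ z := by
    rintro ⟨x, p⟩
    simp only [hψdef]
    positivity
  have hψb : ∀ R : ℝ, ∃ b : ℝ, ∀ z : H × H, ‖z‖ ≤ R → ψ z ≤ b := by
    intro R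
    refine ⟨1 + R ^ 2 + R ^ 2, ?_⟩
    rintro ⟨x, p⟩ hz
    have h1 : ‖x‖ ≤ R := le_trans (norm_fst_le (x, p)) hz
    have h2 : ‖p‖ ≤ R := le_trans (norm_snd_le (x, p)) hz
    have h3 := pow_le_pow_left₀ (norm_nonneg x) h1 2
    have h4 := pow_le_pow_left₀ (norm_nonneg p) h2 2
    simp only [hψdef]
    linarith
  -- local Lipschitz in the state
  have hLip : ∀ R : ℝ, ∃ CR : ℝ, 0 ≤ CR ∧ ∀ z z' : H × H, ∀ q ∈ Λt,
      ‖z‖ ≤ R → ‖z'‖ ≤ R → ‖q‖ ≤ R → |G z q - G z' q| ≤ CR * ‖z - z'‖ := by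
    intro R
    set Rp : ℝ := max R 0 with hRpdef
    have hRp0 : 0 ≤ Rp := le_max_right _ _
    set M : ℝ := Kf + Cf * Rp + Cf * (1 + Rp) with hMdef
    have hM0 : 0 ≤ M := by
      rw [hMdef]
      nlinarith [mul_nonneg hCf hRp0]
    refine ⟨2 * Cf * Rp + M + 2 * Cb,
      by nlinarith [mul_nonneg (mul_nonneg (by norm_num : (0:ℝ) ≤ 2) hCf) hRp0], ?_⟩
    rintro ⟨x, p⟩ ⟨x', p'⟩ q hq hz hz' hqR
    have hx : ‖x‖ ≤ Rp := le_trans (le_trans (norm_fst_le (x, p)) hz) (le_max_left _ _)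
    have hp : ‖p‖ ≤ Rp := le_trans (le_trans (norm_snd_le (x, p)) hz) (le_max_left _ _)
    have hx' : ‖x'‖ ≤ Rp := le_trans (le_trans (norm_fst_le (x', p')) hz') (le_max_left _ _)
    have hqp2 : ‖q‖ ≤ Rp := le_trans hqR (le_max_left _ _)
    have hxx' : ‖x - x'‖ ≤ ‖(x, p) - (x', p')‖ := norm_fst_le ((x, p) - (x', p'))
    have hpp' : ‖p - p'‖ ≤ ‖(x, p) - (x', p')‖ := norm_snd_le ((x, p) - (x', p'))
    have hdecomp : G (x, p) q - G (x', p') q =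
        ⟪(f₁ x μ + f₂ x μ q) - (f₁ x' μ + f₂ x' μ q), p⟫
        + ⟪f₁ x' μ + f₂ x' μ q, p - p'⟫
        + ((l₁ x μ - l₁ x' μ) + (l₂ x μ q - l₂ x' μ q)) := by
      simp only [hGdef, inner_sub_left, inner_sub_right]
      ring
    have hΔf : ‖(f₁ x μ + f₂ x μ q) - (f₁ x' μ + f₂ x' μ q)‖ ≤ 2 * Cf * ‖x - x'‖ := by
      have e1 := F1 x x'
      have e2 := F2 x x' q hq
      calc ‖(f₁ x μ + f₂ x μ q) - (f₁ x' μ + f₂ x' μ q)‖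
          = ‖(f₁ x μ - f₁ x' μ) + (f₂ x μ q - f₂ x' μ q)‖ := by congr 1; abel
        _ ≤ ‖f₁ x μ - f₁ x' μ‖ + ‖f₂ x μ q - f₂ x' μ q‖ := norm_add_le _ _
        _ ≤ 2 * Cf * ‖x - x'‖ := by linarith
    have hT1 : |⟪(f₁ x μ + f₂ x μ q) - (f₁ x' μ + f₂ x' μ q), p⟫| ≤
        2 * Cf * Rp * ‖x - x'‖ := by
      refine (hinner _ _).trans ?_
      calc ‖(f₁ x μ + f₂ x μ q) - (f₁ x' μ + f₂ x' μ q)‖ * ‖p‖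
          ≤ (2 * Cf * ‖x - x'‖) * Rp :=
            mul_le_mul hΔf hp (norm_nonneg _) (mul_nonneg (mul_nonneg (by norm_num) hCf) (norm_nonneg _))
        _ = 2 * Cf * Rp * ‖x - x'‖ := by ring
    have hT2 : |⟪f₁ x' μ + f₂ x' μ q, p - p'⟫| ≤ M * ‖p - p'‖ := by
      refine (hinner _ _).trans ?_
      refine mul_le_mul_of_nonneg_right ?_ (norm_nonneg _)
      refine (hFbd x' q hq).trans ?_
      rw [hMdef]
      have e3 : Cf * ‖x'‖ ≤ Cf * Rp := mul_le_mul_of_nonneg_left hx' hCf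
      have e4 : Cf * (1 + ‖q‖) ≤ Cf * (1 + Rp) :=
        mul_le_mul_of_nonneg_left (by linarith) hCf
      linarith
    have hT3 : |(l₁ x μ - l₁ x' μ) + (l₂ x μ q - l₂ x' μ q)| ≤ 2 * Cb * ‖x - x'‖ := by
      have h4 := F4 x x'
      have h5 := F5 x x' q hq
      calc |(l₁ x μ - l₁ x' μ) + (l₂ x μ q - l₂ x' μ q)|
          ≤ |l₁ x μ - l₁ x' μ| + |l₂ x μ q - l₂ x' μ q| := abs_add_le _ _
        _ ≤ 2 * Cb * ‖x - x'‖ := by linarith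
    have habs3 : |G (x, p) q - G (x', p') q| ≤
        2 * Cf * Rp * ‖x - x'‖ + M * ‖p - p'‖ + 2 * Cb * ‖x - x'‖ := by
      rw [hdecomp]
      have ha1 := abs_add_le (⟪(f₁ x μ + f₂ x μ q) - (f₁ x' μ + f₂ x' μ q), p⟫
          + ⟪f₁ x' μ + f₂ x' μ q, p - p'⟫)
        ((l₁ x μ - l₁ x' μ) + (l₂ x μ q - l₂ x' μ q))
      have ha2 := abs_add_le (⟪(f₁ x μ + f₂ x μ q) - (f₁ x' μ + f₂ x' μ q), p⟫)
        (⟪f₁ x' μ + f₂ x' μ q, p - p'⟫)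
      linarith
    refine habs3.trans ?_
    have e1 : 2 * Cf * Rp * ‖x - x'‖ ≤ 2 * Cf * Rp * ‖(x, p) - (x', p')‖ :=
      mul_le_mul_of_nonneg_left hxx' (mul_nonneg (mul_nonneg (by norm_num) hCf) hRp0)
    have e2 : M * ‖p - p'‖ ≤ M * ‖(x, p) - (x', p')‖ :=
      mul_le_mul_of_nonneg_left hpp' hM0
    have e3 : 2 * Cb * ‖x - x'‖ ≤ 2 * Cb * ‖(x, p) - (x', p')‖ :=
      mul_le_mul_of_nonneg_left hxx' (by linarith)
    linarith
  -- integrability of ψ along the trajectory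
  have hX2' : Integrable (fun ω => ‖X ω‖ ^ 2) ν :=
    integrable_sq_of_lintegral ν X hXm.norm.aemeasurable hX2
  have hP2' : Integrable (fun ω => ‖P ω‖ ^ 2) ν :=
    integrable_sq_of_lintegral ν P hPm.norm.aemeasurable hP2
  have hψΦ : Integrable (fun ω => ψ (X ω, P ω)) ν := by
    have heq : (fun ω => ψ (X ω, P ω)) = fun ω => 1 + ‖X ω‖ ^ 2 + ‖P ω‖ ^ 2 := by
      funext ω
      simp only [hψdef]
    rw [heq]
    exact ((integrable_const 1).add hX2').add hP2'
  obtain ⟨h1, h2, h3⟩ := abstract_main ν Λt q₀ hq₀ G hGm hGc ψ hψ0 hψb A hA0 (C₂ / 2)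
    (half_pos hC₂) habs hlo hLip (fun ω => (X ω, P ω)) (hXm.prodMk hPm) hψΦ
  exact ⟨h1, h2, h3⟩

end
end

section
/- Assume (Af), assume that for every μ ∈ 𝒫₂(H) the map (x,q) ↦ f(x,μ,q) is Borel measurable on H × Λ̃, and assume the one-sided estimate: there is C ≥ 0 with ⟨f(x,μ,q) − f(y,β,q), B(x−y)⟩ ≤ C(|x−y|²_{−1} + d_{−1,r}(μ,β)²) for all x,y ∈ H, μ,β ∈ 𝒫₂(H), q ∈ Λ̃. Then there is a constant C' ≥ 0 such that for all Borel measurable X, Y : (0,1) → H with ∫_0^1 |X(ω)|² dω < ∞ and ∫_0^1 |Y(ω)|² dω < ∞, and every Borel measurable Q : (0,1) → Λ with Q(ω) ∈ Λ̃ for a.e. ω and ∫_0^1 |Q(ω)|²_Λ dω < ∞, one has ∫_0^1 ⟨f(X(ω), X_#𝓛¹, Q(ω)) − f(Y(ω), Y_#𝓛¹, Q(ω)), B(X(ω) − Y(ω))⟩ dω ≤ C' ∫_0^1 |X(ω) − Y(ω)|²_{−1} dω. -/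
open MeasureTheory
open scoped RealInnerProductSpace ENNReal

section

variable {H : Type*} [NormedAddCommGroup H] [InnerProductSpace ℝ H] [CompleteSpace H]
  [SecondCountableTopology H] [MeasurableSpace H] [BorelSpace H]
variable {Λ : Type*} [NormedAddCommGroup Λ] [InnerProductSpace ℝ Λ] [CompleteSpace Λ]
  [SecondCountableTopology Λ] [MeasurableSpace Λ] [BorelSpace Λ]

/-- Under (Af), Borel measurability of `f` on `H × Λ̃`, and the one-sided
estimate `⟨f(x,μ,q) − f(y,β,q), B(x−y)⟩ ≤ C(|x−y|²_{−1} + d_{−1,r}(μ,β)²)`, the lifted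
drift satisfies the one-sided estimate
`∫₀¹ ⟨f(X(ω),X_#𝓛¹,Q(ω)) − f(Y(ω),Y_#𝓛¹,Q(ω)), B(X(ω)−Y(ω))⟩ dω ≤ C' ∫₀¹ |X(ω)−Y(ω)|²_{−1} dω`. -/
theorem statement12
    (r : ℝ) (hr1 : 1 ≤ r) (hr2 : r < 2)
    (B : H →L[ℝ] H)
    (hBsa : ∀ x y : H, ⟪B x, y⟫ = ⟪x, B y⟫)
    (hBpos : ∀ x : H, x ≠ 0 → 0 < ⟪B x, x⟫)
    (f₁ : H → Measure H → H) (f₂ : H → Measure H → Λ → H)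
    (Λt : Set Λ) (hΛne : Λt.Nonempty) (hΛconv : Convex ℝ Λt)
    -- Assumption (Af)
    (Cf : ℝ) (hCf : 0 ≤ Cf)
    (hf_lip : ∀ (x y : H) (μ β : Measure H) (q : Λ), IsP2 μ → IsP2 β → q ∈ Λt →
      ‖f₁ x μ - f₁ y β‖ + ‖f₂ x μ q - f₂ y β q‖ ≤ Cf * (‖x - y‖ + dr r μ β))
    (hf₂bd : ∀ (x : H) (μ : Measure H) (q : Λ), IsP2 μ → q ∈ Λt →
      ‖f₂ x μ q‖ ≤ Cf * (1 + ‖q‖))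
    -- Borel measurability of `f` on `H × Λ̃`
    (hfm : ∀ μ : Measure H,
      Measurable (fun z : H × Λt => f₁ z.1 μ + f₂ z.1 μ (z.2 : Λ)))
    -- the one-sided estimate in the weak norm
    (Cw : ℝ) (hCw : 0 ≤ Cw)
    (hfB : ∀ (x y : H) (μ β : Measure H) (q : Λ), IsP2 μ → IsP2 β → q ∈ Λt →
      ⟪(f₁ x μ + f₂ x μ q) - (f₁ y β + f₂ y β q), B (x - y)⟫
        ≤ Cw * (nrmB B (x - y) ^ 2 + drB B r μ β ^ 2)) :
    ∃ C' : ℝ, 0 ≤ C' ∧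
      ∀ (X Y : ℝ → H) (Q : ℝ → Λ), Measurable X → Measurable Y → Measurable Q →
        (∫⁻ ω in Set.Ioo (0:ℝ) 1, (‖X ω‖₊ : ℝ≥0∞) ^ 2) < ⊤ →
        (∫⁻ ω in Set.Ioo (0:ℝ) 1, (‖Y ω‖₊ : ℝ≥0∞) ^ 2) < ⊤ →
        (∀ᵐ ω ∂(volume.restrict (Set.Ioo (0:ℝ) 1)), Q ω ∈ Λt) →
        (∫⁻ ω in Set.Ioo (0:ℝ) 1, (‖Q ω‖₊ : ℝ≥0∞) ^ 2) < ⊤ →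
        (∫ ω in Set.Ioo (0:ℝ) 1,
            ⟪(f₁ (X ω) (Measure.map X (volume.restrict (Set.Ioo (0:ℝ) 1))) +
                  f₂ (X ω) (Measure.map X (volume.restrict (Set.Ioo (0:ℝ) 1))) (Q ω)) -
                (f₁ (Y ω) (Measure.map Y (volume.restrict (Set.Ioo (0:ℝ) 1))) +
                  f₂ (Y ω) (Measure.map Y (volume.restrict (Set.Ioo (0:ℝ) 1))) (Q ω)),
              B (X ω - Y ω)⟫)
          ≤ C' * ∫ ω in Set.Ioo (0:ℝ) 1, nrmB B (X ω - Y ω) ^ 2 := by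
  classical
  refine ⟨2 * Cw, by positivity, ?_⟩
  intro X Y Q hX hY hQ hX2 hY2 hQΛ hQ2
  set P : Measure ℝ := volume.restrict (Set.Ioo (0:ℝ) 1) with hPdef
  haveI hPprob : IsProbabilityMeasure P := ⟨by simp [hPdef, Real.volume_Ioo]⟩
  set μ : Measure H := Measure.map X P with hμdef
  set β : Measure H := Measure.map Y P with hβdef
  have hrpos : (0:ℝ) < r := lt_of_lt_of_le one_pos hr1
  have hr0 : (0:ℝ) ≤ r := hrpos.le
  have hBnn : ∀ x : H, 0 ≤ ⟪B x, x⟫ := by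
    intro x
    rcases eq_or_ne x 0 with h | h
    · simp [h]
    · exact (hBpos x h).le
  have hncont : Continuous (nrmB B) :=
    Real.continuous_sqrt.comp (B.continuous.inner continuous_id)
  have hgmeas : Measurable (fun ω => nrmB B (X ω - Y ω)) :=
    hncont.measurable.comp (hX.sub hY)
  have hgnn : ∀ ω, 0 ≤ nrmB B (X ω - Y ω) := fun ω => Real.sqrt_nonneg _
  have hsq : ∀ x : H, nrmB B x ^ 2 = ⟪B x, x⟫ := fun x => Real.sq_sqrt (hBnn x)
  have hgbd : ∀ ω, nrmB B (X ω - Y ω) ^ 2 ≤ ‖B‖ * ‖X ω - Y ω‖ ^ 2 := by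
    intro ω
    rw [hsq]
    calc ⟪B (X ω - Y ω), X ω - Y ω⟫ ≤ ‖B (X ω - Y ω)‖ * ‖X ω - Y ω‖ :=
          real_inner_le_norm _ _
    _ ≤ (‖B‖ * ‖X ω - Y ω‖) * ‖X ω - Y ω‖ := by
          have := B.le_opNorm (X ω - Y ω)
          have := norm_nonneg (X ω - Y ω)
          nlinarith
    _ = ‖B‖ * ‖X ω - Y ω‖ ^ 2 := by ring
  have hIX : Integrable (fun ω => ‖X ω‖ ^ 2) P :=
    ⟨(hX.norm.pow_const 2).aestronglyMeasurable, by
      simpa [HasFiniteIntegral, ENNReal.coe_pow, enorm_eq_nnnorm] using hX2⟩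
  have hIY : Integrable (fun ω => ‖Y ω‖ ^ 2) P :=
    ⟨(hY.norm.pow_const 2).aestronglyMeasurable, by
      simpa [HasFiniteIntegral, ENNReal.coe_pow, enorm_eq_nnnorm] using hY2⟩
  have hIXY : Integrable (fun ω => ‖X ω - Y ω‖ ^ 2) P := by
    refine ((hIX.const_mul 2).add (hIY.const_mul 2)).mono'
      ((hX.sub hY).norm.pow_const 2).aestronglyMeasurable ?_
    filter_upwards with ω
    have h1 : ‖X ω - Y ω‖ ≤ ‖X ω‖ + ‖Y ω‖ := norm_sub_le _ _
    have h2 := norm_nonneg (X ω); have h3 := norm_nonneg (Y ω)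
    have h4 := norm_nonneg (X ω - Y ω)
    rw [Real.norm_of_nonneg (by positivity)]
    show ‖X ω - Y ω‖ ^ 2 ≤ 2 * ‖X ω‖ ^ 2 + 2 * ‖Y ω‖ ^ 2
    nlinarith [mul_le_mul h1 h1 h4 (by positivity : (0:ℝ) ≤ ‖X ω‖ + ‖Y ω‖),
      sq_nonneg (‖X ω‖ - ‖Y ω‖)]
  have hIg2 : Integrable (fun ω => nrmB B (X ω - Y ω) ^ 2) P := by
    refine (hIXY.const_mul ‖B‖).mono' (hgmeas.pow_const 2).aestronglyMeasurable ?_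
    filter_upwards with ω
    rw [Real.norm_of_nonneg (by positivity)]
    show nrmB B (X ω - Y ω) ^ 2 ≤ ‖B‖ * ‖X ω - Y ω‖ ^ 2
    exact hgbd ω
  set Sv : ℝ := ∫ ω, nrmB B (X ω - Y ω) ^ 2 ∂P with hSvdef
  have hSv0 : 0 ≤ Sv := integral_nonneg fun ω => by positivity
  have hrpow2 : ∀ ω, nrmB B (X ω - Y ω) ^ (2:ℝ) = nrmB B (X ω - Y ω) ^ 2 := by
    intro ω
    rw [show (2:ℝ) = ((2:ℕ):ℝ) by norm_num, Real.rpow_natCast]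
  have hIgr : Integrable (fun ω => nrmB B (X ω - Y ω) ^ r) P := by
    refine ((integrable_const (1:ℝ)).add hIg2).mono'
      ((Real.continuous_rpow_const hr0).measurable.comp hgmeas).aestronglyMeasurable ?_
    filter_upwards with ω
    rw [Real.norm_of_nonneg (Real.rpow_nonneg (hgnn ω) r)]
    show nrmB B (X ω - Y ω) ^ r ≤ 1 + nrmB B (X ω - Y ω) ^ 2
    rcases le_total (nrmB B (X ω - Y ω)) 1 with h | h
    · have h1 : nrmB B (X ω - Y ω) ^ r ≤ 1 := Real.rpow_le_one (hgnn ω) h hr0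
      nlinarith [sq_nonneg (nrmB B (X ω - Y ω))]
    · have h1 : nrmB B (X ω - Y ω) ^ r ≤ nrmB B (X ω - Y ω) ^ (2:ℝ) :=
        Real.rpow_le_rpow_of_exponent_le h hr2.le
      rw [hrpow2 ω] at h1
      nlinarith
  set A : ℝ := ∫ ω, nrmB B (X ω - Y ω) ^ r ∂P with hAdef
  have hA0 : 0 ≤ A := integral_nonneg fun ω => Real.rpow_nonneg (hgnn ω) r
  -- Jensen via eLpNorm monotonicity
  have hlint2 : (∫⁻ a, ((‖nrmB B (X a - Y a)‖₊ : ℝ≥0∞)) ^ (2:ℝ) ∂P) = ENNReal.ofReal Sv := by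
    rw [hSvdef, ofReal_integral_eq_lintegral_ofReal hIg2
      (Filter.Eventually.of_forall fun ω => by positivity)]
    refine lintegral_congr fun a => ?_
    rw [← enorm_eq_nnnorm, Real.enorm_eq_ofReal (hgnn a),
      ENNReal.ofReal_rpow_of_nonneg (hgnn a) (by norm_num), hrpow2 a]
  have hlintr : (∫⁻ a, ((‖nrmB B (X a - Y a)‖₊ : ℝ≥0∞)) ^ r ∂P) = ENNReal.ofReal A := by
    rw [hAdef, ofReal_integral_eq_lintegral_ofReal hIgr
      (Filter.Eventually.of_forall fun ω => Real.rpow_nonneg (hgnn ω) r)]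
    refine lintegral_congr fun a => ?_
    rw [← enorm_eq_nnnorm, Real.enorm_eq_ofReal (hgnn a), ENNReal.ofReal_rpow_of_nonneg (hgnn a) hr0]
  have helr : eLpNorm (fun ω => nrmB B (X ω - Y ω)) (ENNReal.ofReal r) P
      = ENNReal.ofReal A ^ (1/r) := by
    rw [eLpNorm_eq_lintegral_rpow_enorm_toReal
      (by simp [ENNReal.ofReal_eq_zero]; exact hrpos) ENNReal.ofReal_ne_top,
      ENNReal.toReal_ofReal hr0,
      (by simpa only [enorm_eq_nnnorm] using hlintr : ∫⁻ a, ‖nrmB B (X a - Y a)‖ₑ ^ r ∂P = _)]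
  have hel2 : eLpNorm (fun ω => nrmB B (X ω - Y ω)) 2 P
      = ENNReal.ofReal Sv ^ (1/(2:ℝ)) := by
    rw [eLpNorm_eq_lintegral_rpow_enorm_toReal (by norm_num) (by norm_num),
      show (2:ℝ≥0∞).toReal = (2:ℝ) by norm_num,
      (by simpa only [enorm_eq_nnnorm] using hlint2 : ∫⁻ a, ‖nrmB B (X a - Y a)‖ₑ ^ (2:ℝ) ∂P = _)]
  have key : ENNReal.ofReal A ^ (1/r) ≤ ENNReal.ofReal Sv ^ (1/(2:ℝ)) := by
    rw [← helr, ← hel2]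
    refine eLpNorm_le_eLpNorm_of_exponent_le ?_ hgmeas.aestronglyMeasurable
    rw [show (2:ℝ≥0∞) = ENNReal.ofReal 2 by simp]
    exact ENNReal.ofReal_le_ofReal hr2.le
  have hA_le : A ≤ Sv ^ (r/2) := by
    have h1 : (ENNReal.ofReal A ^ (1/r)) ^ r ≤ (ENNReal.ofReal Sv ^ (1/(2:ℝ))) ^ r :=
      ENNReal.rpow_le_rpow key hr0
    rw [← ENNReal.rpow_mul, ← ENNReal.rpow_mul, one_div_mul_cancel hrpos.ne',
      ENNReal.rpow_one, show 1/(2:ℝ) * r = r/2 by ring,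
      ENNReal.ofReal_rpow_of_nonneg hSv0 (by positivity)] at h1
    exact (ENNReal.ofReal_le_ofReal_iff (Real.rpow_nonneg hSv0 _)).mp h1
  -- the push-forward measures are in 𝒫₂
  have hnn2meas : Measurable fun x : H => (‖x‖₊ : ℝ≥0∞) ^ 2 :=
    measurable_nnnorm.coe_nnreal_ennreal.pow_const 2
  have hμP2 : IsP2 μ := by
    refine ⟨Measure.isProbabilityMeasure_map hX.aemeasurable, ?_⟩
    rw [hμdef, lintegral_map hnn2meas hX]
    exact hX2
  have hβP2 : IsP2 β := by
    refine ⟨Measure.isProbabilityMeasure_map hY.aemeasurable, ?_⟩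
    rw [hβdef, lintegral_map hnn2meas hY]
    exact hY2
  -- Wasserstein distance estimate via the obvious coupling
  set S : Set ℝ := { c : ℝ | ∃ γ : Measure (H × H), IsProbabilityMeasure γ ∧
      γ.map Prod.fst = μ ∧ γ.map Prod.snd = β ∧
      c = (∫ p, nrmB B (p.1 - p.2) ^ r ∂γ) ^ (1 / r) } with hSdef
  have hSlb : ∀ c ∈ S, (0:ℝ) ≤ c := by
    rintro c ⟨γ, _, _, _, rfl⟩
    exact Real.rpow_nonneg
      (integral_nonneg fun p => Real.rpow_nonneg (Real.sqrt_nonneg _) r) _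
  have hmemS : A ^ (1/r) ∈ S := by
    refine ⟨P.map (fun ω => (X ω, Y ω)), ?_, ?_, ?_, ?_⟩
    · exact Measure.isProbabilityMeasure_map (hX.prodMk hY).aemeasurable
    · rw [Measure.map_map measurable_fst (hX.prodMk hY)]; rfl
    · rw [Measure.map_map measurable_snd (hX.prodMk hY)]; rfl
    · have hcont : Continuous (fun p : H × H => nrmB B (p.1 - p.2) ^ r) :=
        (hncont.comp (continuous_fst.sub continuous_snd)).rpow_const fun _ => Or.inr hr0
      rw [integral_map (hX.prodMk hY).aemeasurable hcont.aestronglyMeasurable]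
  have hdrB_eq : drB B r μ β = sInf S := rfl
  have hdrB_le : drB B r μ β ≤ A ^ (1/r) := by
    rw [hdrB_eq]
    exact csInf_le ⟨0, fun c hc => hSlb c hc⟩ hmemS
  have hd0 : 0 ≤ drB B r μ β := by
    rw [hdrB_eq]
    exact Real.sInf_nonneg hSlb
  have hdle : drB B r μ β ≤ Sv ^ (1/(2:ℝ)) := by
    refine hdrB_le.trans ?_
    calc A ^ (1/r) ≤ (Sv ^ (r/2)) ^ (1/r) :=
          Real.rpow_le_rpow hA0 hA_le (by positivity)
    _ = Sv ^ (1/(2:ℝ)) := by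
        rw [← Real.rpow_mul hSv0]
        congr 1
        field_simp
  have hd2 : drB B r μ β ^ 2 ≤ Sv := by
    calc drB B r μ β ^ 2 ≤ (Sv ^ (1/(2:ℝ))) ^ 2 := by
          exact pow_le_pow_left₀ hd0 hdle 2
    _ = Sv := by
        rw [← Real.rpow_natCast (Sv ^ (1/(2:ℝ))) 2, ← Real.rpow_mul hSv0]
        norm_num
  -- pointwise one-sided bound
  have hptwise : ∀ᵐ ω ∂P,
      ⟪(f₁ (X ω) μ + f₂ (X ω) μ (Q ω)) - (f₁ (Y ω) β + f₂ (Y ω) β (Q ω)),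
        B (X ω - Y ω)⟫ ≤ Cw * (nrmB B (X ω - Y ω) ^ 2 + drB B r μ β ^ 2) := by
    filter_upwards [hQΛ] with ω hω
    exact hfB _ _ _ _ _ hμP2 hβP2 hω
  have hIrhs : Integrable
      (fun ω => Cw * (nrmB B (X ω - Y ω) ^ 2 + drB B r μ β ^ 2)) P :=
    (hIg2.add (integrable_const _)).const_mul Cw
  by_cases hInt : Integrable (fun ω =>
      ⟪(f₁ (X ω) μ + f₂ (X ω) μ (Q ω)) - (f₁ (Y ω) β + f₂ (Y ω) β (Q ω)),
        B (X ω - Y ω)⟫) P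
  · calc (∫ ω, ⟪(f₁ (X ω) μ + f₂ (X ω) μ (Q ω)) -
          (f₁ (Y ω) β + f₂ (Y ω) β (Q ω)), B (X ω - Y ω)⟫ ∂P)
        ≤ ∫ ω, Cw * (nrmB B (X ω - Y ω) ^ 2 + drB B r μ β ^ 2) ∂P :=
          integral_mono_ae hInt hIrhs hptwise
    _ = Cw * (Sv + drB B r μ β ^ 2) := by
        rw [integral_const_mul, integral_add hIg2 (integrable_const _),
          integral_const, probReal_univ]
        simp [hSvdef]
    _ ≤ 2 * Cw * Sv := by nlinarith
  · rw [integral_undef hInt]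
    have : (0:ℝ) ≤ 2 * Cw * Sv := by
      have : (0:ℝ) ≤ 2 * Cw := by positivity
      exact mul_nonneg this hSv0
    exact this


end
end
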